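/- arXiv:1910.08454 — 6 statements merged into one kernel-verified Lean document; each statement's English description precedes it below -/
import Mathlib

section
/- A finite simple graph H with at least one edge is weakly norming if and only if t_H is a convex function on the set of graphons, i.e., for all graphons W_1, W_2 and all λ ∈ [0,1], t_H(λW_1 + (1−λ)W_2) ≤ λ t_H(W_1) + (1−λ) t_H(W_2). -/
open MeasureTheory

/-- A linear order on `Fin a × Fin b` (lexicographic), used to enumerate each edge once. -/
instance finProdLinearOrder {a b : ℕ} : LinearOrder (Fin a × Fin b) :=
  LinearOrder.lift' (toLex : Fin a × Fin b → Fin a ×ₗ Fin b) toLex.injective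

/-- The homomorphism density `t_H(W)` of a two-variable kernel `W` in a graph `H`. -/
noncomputable def homDensity {V : Type} [Fintype V] [LinearOrder V]
    (H : SimpleGraph V) [DecidableRel H.Adj] (W : ℝ → ℝ → ℝ) : ℝ :=
  ∫ x in (Set.univ.pi fun _ : V => Set.Icc (0 : ℝ) 1),
    ∏ p ∈ Finset.univ.filter (fun p : V × V => p.1 < p.2 ∧ H.Adj p.1 p.2),
      W (x p.1) (x p.2)

/-- The number of edges `e(H)` of `H`, enumerated as ordered pairs `(u,v)` with `u < v`. -/
def edgeCount {V : Type} [Fintype V] [LinearOrder V]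
    (H : SimpleGraph V) [DecidableRel H.Adj] : ℕ :=
  (Finset.univ.filter (fun p : V × V => p.1 < p.2 ∧ H.Adj p.1 p.2)).card

/-- Membership in `𝒲`: bounded symmetric measurable functions `[0,1]² → ℝ`
(defined on all of `ℝ²`). -/
def IsKernel (W : ℝ → ℝ → ℝ) : Prop :=
  Measurable (Function.uncurry W) ∧ (∀ x y, W x y = W y x) ∧ ∃ C : ℝ, ∀ x y, |W x y| ≤ C

/-- A graphon: symmetric measurable with values in `[0,1]`. -/
def IsGraphon (W : ℝ → ℝ → ℝ) : Prop :=
  Measurable (Function.uncurry W) ∧ (∀ x y, W x y = W y x) ∧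
    ∀ x y, W x y ∈ Set.Icc (0 : ℝ) 1

/-- A signed graphon: symmetric measurable with values in `[-1,1]`. -/
def IsSignedGraphon (W : ℝ → ℝ → ℝ) : Prop :=
  Measurable (Function.uncurry W) ∧ (∀ x y, W x y = W y x) ∧
    ∀ x y, W x y ∈ Set.Icc (-1 : ℝ) 1

/-- `H` is weakly norming: `W ↦ t_H(|W|)^{1/e(H)}` satisfies the triangle inequality on `𝒲`. -/
def WeaklyNorming {V : Type} [Fintype V] [LinearOrder V]
    (H : SimpleGraph V) [DecidableRel H.Adj] : Prop :=
  ∀ U W : ℝ → ℝ → ℝ, IsKernel U → IsKernel W →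
    homDensity H (fun x y => |U x y + W x y|) ^ ((edgeCount H : ℝ)⁻¹) ≤
      homDensity H (fun x y => |U x y|) ^ ((edgeCount H : ℝ)⁻¹) +
        homDensity H (fun x y => |W x y|) ^ ((edgeCount H : ℝ)⁻¹)

/-- `H` is norming: `W ↦ |t_H(W)|^{1/e(H)}` satisfies the triangle inequality on `𝒲`
and vanishes only at a.e.-zero functions. -/
def Norming {V : Type} [Fintype V] [LinearOrder V]
    (H : SimpleGraph V) [DecidableRel H.Adj] : Prop :=
  (∀ U W : ℝ → ℝ → ℝ, IsKernel U → IsKernel W →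
      |homDensity H (fun x y => U x y + W x y)| ^ ((edgeCount H : ℝ)⁻¹) ≤
        |homDensity H U| ^ ((edgeCount H : ℝ)⁻¹) +
          |homDensity H W| ^ ((edgeCount H : ℝ)⁻¹)) ∧
  (∀ W : ℝ → ℝ → ℝ, IsKernel W → homDensity H W = 0 →
      (∀ᵐ p : ℝ × ℝ ∂(volume.restrict (Set.Icc (0:ℝ) 1 ×ˢ Set.Icc (0:ℝ) 1)),
        W p.1 p.2 = 0))

/-- The polynomial `P_{H,n}(A) = Σ_{φ : V(H) → [n]} Π_{uv ∈ E(H)} a_{φ(u)φ(v)}`. -/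
noncomputable def graphPoly {V : Type} [Fintype V] [LinearOrder V]
    (H : SimpleGraph V) [DecidableRel H.Adj] {n : ℕ} (A : Matrix (Fin n) (Fin n) ℝ) : ℝ :=
  ∑ φ : V → Fin n,
    ∏ p ∈ Finset.univ.filter (fun p : V × V => p.1 < p.2 ∧ H.Adj p.1 p.2),
      A (φ p.1) (φ p.2)

/-- The graph `C_k^⋈` on `{1,…,k} × {1,2}`: `(u,i)` adjacent to `(v,j)` iff `i ≠ j` and
`u - v ∈ {-1,0,1} (mod k)`. -/
def cycleBowtie (k : ℕ) : SimpleGraph (Fin k × Fin 2) where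
  Adj p q := p.2 ≠ q.2 ∧
    (p.1 = q.1 ∨ ((p.1 : ℕ) + 1) % k = (q.1 : ℕ) ∨ ((q.1 : ℕ) + 1) % k = (p.1 : ℕ))
  symm := by
    constructor
    rintro p q ⟨h1, h2⟩
    refine ⟨h1.symm, ?_⟩
    rcases h2 with h | h | h
    · exact Or.inl h.symm
    · exact Or.inr (Or.inr h)
    · exact Or.inr (Or.inl h)
  loopless := by constructor; rintro p ⟨h1, -⟩; exact h1 rfl

noncomputable instance (k : ℕ) : DecidableRel (cycleBowtie k).Adj :=
  fun _ _ => Classical.dec _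

/-- `K_{t,t}` minus a perfect matching, on vertex set `Fin t × Fin 2`:
`(i,0)` is adjacent to `(j,1)` iff `i ≠ j`. -/
def kttMinusPM (t : ℕ) : SimpleGraph (Fin t × Fin 2) where
  Adj p q := p.2 ≠ q.2 ∧ p.1 ≠ q.1
  symm := by constructor; rintro p q ⟨h1, h2⟩; exact ⟨h1.symm, h2.symm⟩
  loopless := by constructor; rintro p ⟨h1, -⟩; exact h1 rfl

noncomputable instance (t : ℕ) : DecidableRel (kttMinusPM t).Adj :=
  fun _ _ => Classical.dec _

/-- The Möbius ladder `K_{5,5} \ C_{10}` on `Fin 5 × Fin 2`, with parts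
`a_i = (i,0)`, `b_j = (j,1)`; `a_i ~ b_j` iff `j ∉ {i, i+1} (mod 5)`. -/
def mobius : SimpleGraph (Fin 5 × Fin 2) where
  Adj p q := p.2 ≠ q.2 ∧
    ((p.2 = 0 ∧ (q.1 : ℕ) ≠ (p.1 : ℕ) ∧ (q.1 : ℕ) ≠ ((p.1 : ℕ) + 1) % 5) ∨
     (q.2 = 0 ∧ (p.1 : ℕ) ≠ (q.1 : ℕ) ∧ (p.1 : ℕ) ≠ ((q.1 : ℕ) + 1) % 5))
  symm := by constructor; rintro p q ⟨h1, h2⟩; exact ⟨h1.symm, h2.symm⟩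
  loopless := by constructor; rintro p ⟨h1, -⟩; exact h1 rfl

noncomputable instance : DecidableRel mobius.Adj := fun _ _ => Classical.dec _

/-- The block matrix `[[J_n, -J_n], [-J_n, J_n]]`. -/
def blockMat (n : ℕ) : Matrix (Fin (2*n)) (Fin (2*n)) ℝ :=
  Matrix.of fun i j => if (((i : ℕ) < n) ↔ ((j : ℕ) < n)) then 1 else -1

/-- The `m × m` all-ones matrix `J_m`. -/
def onesMat (m : ℕ) : Matrix (Fin m) (Fin m) ℝ := Matrix.of fun _ _ => 1

/-- The step function `U_A` associated to an `n × n` matrix `A`. -/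
noncomputable def stepFn (n : ℕ) (A : Matrix (Fin n) (Fin n) ℝ) : ℝ → ℝ → ℝ := fun x y =>
  if h : 0 < n ∧ x ∈ Set.Ico (0 : ℝ) 1 ∧ y ∈ Set.Ico (0 : ℝ) 1 then
    A ⟨⌊n * x⌋₊ % n, Nat.mod_lt _ h.1⟩ ⟨⌊n * y⌋₊ % n, Nat.mod_lt _ h.1⟩
  else 0

/-- The cut norm `‖W‖_□ = sup_{S,T ⊆ [0,1]} |∫_{S×T} W|`. -/
noncomputable def cutNorm (W : ℝ → ℝ → ℝ) : ℝ :=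
  sSup { r : ℝ | ∃ S T : Set ℝ, MeasurableSet S ∧ MeasurableSet T ∧
    S ⊆ Set.Icc 0 1 ∧ T ⊆ Set.Icc 0 1 ∧
    r = |∫ p in S ×ˢ T, W p.1 p.2| }


section ConvexHelpers

variable {V : Type} [Fintype V] [LinearOrder V]
    (H : SimpleGraph V) [DecidableRel H.Adj]

omit [LinearOrder V] in
lemma box_ne_top : volume (Set.univ.pi fun _ : V => Set.Icc (0 : ℝ) 1) ≠ ⊤ :=
  ((isCompact_univ_pi fun _ => isCompact_Icc).measure_lt_top).ne

lemma measurable_integrand {W : ℝ → ℝ → ℝ} (hW : Measurable (Function.uncurry W)) :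
    Measurable (fun x : V → ℝ =>
      ∏ p ∈ Finset.univ.filter (fun p : V × V => p.1 < p.2 ∧ H.Adj p.1 p.2),
        W (x p.1) (x p.2)) := by
  apply Finset.measurable_prod
  intro p _
  have : Measurable fun x : V → ℝ => Function.uncurry W (x p.1, x p.2) :=
    hW.comp ((measurable_pi_apply p.1).prodMk (measurable_pi_apply p.2))
  exact this

lemma integrableOn_integrand {W : ℝ → ℝ → ℝ} (hW : Measurable (Function.uncurry W))
    {C : ℝ} (hC : ∀ x y, |W x y| ≤ C) :
    IntegrableOn (fun x : V → ℝ =>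
      ∏ p ∈ Finset.univ.filter (fun p : V × V => p.1 < p.2 ∧ H.Adj p.1 p.2),
        W (x p.1) (x p.2))
      (Set.univ.pi fun _ : V => Set.Icc (0 : ℝ) 1) := by
  apply Measure.integrableOn_of_bounded (M := C ^ edgeCount H) (box_ne_top)
    (measurable_integrand H hW).aestronglyMeasurable
  filter_upwards with x
  rw [Real.norm_eq_abs, Finset.abs_prod]
  calc ∏ p ∈ Finset.univ.filter (fun p : V × V => p.1 < p.2 ∧ H.Adj p.1 p.2),
        |W (x p.1) (x p.2)|
      ≤ ∏ _p ∈ Finset.univ.filter (fun p : V × V => p.1 < p.2 ∧ H.Adj p.1 p.2), C :=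
        Finset.prod_le_prod (fun _ _ => abs_nonneg _) (fun _ _ => hC _ _)
    _ = C ^ edgeCount H := Finset.prod_const _

lemma homDensity_nonneg {W : ℝ → ℝ → ℝ} (hW : ∀ x y, 0 ≤ W x y) :
    0 ≤ homDensity H W :=
  integral_nonneg fun _ => Finset.prod_nonneg fun _ _ => hW _ _

lemma homDensity_mono {U W : ℝ → ℝ → ℝ}
    (hUm : Measurable (Function.uncurry U)) (hWm : Measurable (Function.uncurry W))
    {CU CW : ℝ} (hCU : ∀ x y, |U x y| ≤ CU) (hCW : ∀ x y, |W x y| ≤ CW)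
    (hU0 : ∀ x y, 0 ≤ U x y) (hUW : ∀ x y, U x y ≤ W x y) :
    homDensity H U ≤ homDensity H W := by
  apply setIntegral_mono_on (integrableOn_integrand H hUm hCU)
    (integrableOn_integrand H hWm hCW)
    (MeasurableSet.univ_pi fun _ => measurableSet_Icc)
  intro x _
  exact Finset.prod_le_prod (fun _ _ => hU0 _ _) (fun _ _ => hUW _ _)

lemma homDensity_const_mul (c : ℝ) (W : ℝ → ℝ → ℝ) :
    homDensity H (fun x y => c * W x y) = c ^ edgeCount H * homDensity H W := by
  unfold homDensity
  simp_rw [Finset.prod_mul_distrib, Finset.prod_const]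
  rw [MeasureTheory.integral_const_mul]
  rfl

/-- Convexity on graphons extends by homogeneity to nonnegative bounded kernels. -/
lemma homDensity_convex_ext
    (hcvx : ∀ W₁ W₂ : ℝ → ℝ → ℝ, IsGraphon W₁ → IsGraphon W₂ →
        ∀ l : ℝ, l ∈ Set.Icc (0 : ℝ) 1 →
          homDensity H (fun x y => l * W₁ x y + (1 - l) * W₂ x y) ≤
            l * homDensity H W₁ + (1 - l) * homDensity H W₂)
    {U W : ℝ → ℝ → ℝ}
    (hUm : Measurable (Function.uncurry U)) (hWm : Measurable (Function.uncurry W))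
    (hUs : ∀ x y, U x y = U y x) (hWs : ∀ x y, W x y = W y x)
    (hU0 : ∀ x y, 0 ≤ U x y) (hW0 : ∀ x y, 0 ≤ W x y)
    {C : ℝ} (hC1 : 1 ≤ C) (hCU : ∀ x y, U x y ≤ C) (hCW : ∀ x y, W x y ≤ C)
    {l : ℝ} (hl : l ∈ Set.Icc (0 : ℝ) 1) :
    homDensity H (fun x y => l * U x y + (1 - l) * W x y) ≤
      l * homDensity H U + (1 - l) * homDensity H W := by
  have hC0 : (0 : ℝ) < C := lt_of_lt_of_le one_pos hC1
  set U' : ℝ → ℝ → ℝ := fun x y => C⁻¹ * U x y with hU'def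
  set W' : ℝ → ℝ → ℝ := fun x y => C⁻¹ * W x y with hW'def
  have hU'm : Measurable (Function.uncurry U') := by
    have : Measurable fun p : ℝ × ℝ => C⁻¹ * Function.uncurry U p := hUm.const_mul _
    exact this
  have hW'm : Measurable (Function.uncurry W') := by
    have : Measurable fun p : ℝ × ℝ => C⁻¹ * Function.uncurry W p := hWm.const_mul _
    exact this
  have hGU' : IsGraphon U' := by
    refine ⟨hU'm, fun x y => by simp [hU'def, hUs x y], fun x y => ⟨?_, ?_⟩⟩
    · exact mul_nonneg (inv_nonneg.2 hC0.le) (hU0 x y)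
    · calc C⁻¹ * U x y ≤ C⁻¹ * C :=
            mul_le_mul_of_nonneg_left (hCU x y) (inv_nonneg.2 hC0.le)
        _ = 1 := inv_mul_cancel₀ hC0.ne'
  have hGW' : IsGraphon W' := by
    refine ⟨hW'm, fun x y => by simp [hW'def, hWs x y], fun x y => ⟨?_, ?_⟩⟩
    · exact mul_nonneg (inv_nonneg.2 hC0.le) (hW0 x y)
    · calc C⁻¹ * W x y ≤ C⁻¹ * C :=
            mul_le_mul_of_nonneg_left (hCW x y) (inv_nonneg.2 hC0.le)
        _ = 1 := inv_mul_cancel₀ hC0.ne'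
  have key : (fun x y => l * U x y + (1 - l) * W x y)
      = fun x y => C * (l * U' x y + (1 - l) * W' x y) := by
    funext x y
    simp only [hU'def, hW'def]
    field_simp
  have hCC : C ^ edgeCount H * C⁻¹ ^ edgeCount H = 1 := by
    rw [← mul_pow, mul_inv_cancel₀ hC0.ne', one_pow]
  have h1 := hcvx U' W' hGU' hGW' l hl
  have hUeq : homDensity H U' = C⁻¹ ^ edgeCount H * homDensity H U :=
    homDensity_const_mul H C⁻¹ U
  have hWeq : homDensity H W' = C⁻¹ ^ edgeCount H * homDensity H W :=
    homDensity_const_mul H C⁻¹ W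
  rw [key, homDensity_const_mul]
  calc C ^ edgeCount H * homDensity H (fun x y => l * U' x y + (1 - l) * W' x y)
      ≤ C ^ edgeCount H * (l * homDensity H U' + (1 - l) * homDensity H W') :=
        mul_le_mul_of_nonneg_left h1 (pow_nonneg hC0.le _)
    _ = l * homDensity H U + (1 - l) * homDensity H W := by
        rw [hUeq, hWeq]
        linear_combination (l * homDensity H U + (1 - l) * homDensity H W) * hCC

/-- Convexity implies subadditivity of `t_H(·)^{1/e}` on nonnegative bounded kernels. -/
lemma homDensity_subadd (he : 1 ≤ edgeCount H)
    (hcvx : ∀ W₁ W₂ : ℝ → ℝ → ℝ, IsGraphon W₁ → IsGraphon W₂ →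
        ∀ l : ℝ, l ∈ Set.Icc (0 : ℝ) 1 →
          homDensity H (fun x y => l * W₁ x y + (1 - l) * W₂ x y) ≤
            l * homDensity H W₁ + (1 - l) * homDensity H W₂)
    {U W : ℝ → ℝ → ℝ}
    (hUm : Measurable (Function.uncurry U)) (hWm : Measurable (Function.uncurry W))
    (hUs : ∀ x y, U x y = U y x) (hWs : ∀ x y, W x y = W y x)
    (hU0 : ∀ x y, 0 ≤ U x y) (hW0 : ∀ x y, 0 ≤ W x y)
    {CU CW : ℝ} (hCU : ∀ x y, U x y ≤ CU) (hCW : ∀ x y, W x y ≤ CW) :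
    homDensity H (fun x y => U x y + W x y) ^ ((edgeCount H : ℝ)⁻¹) ≤
      homDensity H U ^ ((edgeCount H : ℝ)⁻¹) +
        homDensity H W ^ ((edgeCount H : ℝ)⁻¹) := by
  have he0 : edgeCount H ≠ 0 := Nat.one_le_iff_ne_zero.mp he
  have tU0 : 0 ≤ homDensity H U := homDensity_nonneg H hU0
  have tW0 : 0 ≤ homDensity H W := homDensity_nonneg H hW0
  apply le_of_forall_sub_le
  intro ε hε
  rw [sub_le_iff_le_add]
  set A : ℝ := homDensity H U ^ ((edgeCount H : ℝ)⁻¹) + ε / 2 with hAdef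
  set B : ℝ := homDensity H W ^ ((edgeCount H : ℝ)⁻¹) + ε / 2 with hBdef
  have hA : 0 < A := by positivity
  have hB : 0 < B := by positivity
  have hAB : 0 < A + B := by positivity
  have hUA : homDensity H U ≤ A ^ edgeCount H := by
    calc homDensity H U = (homDensity H U ^ ((edgeCount H : ℝ)⁻¹)) ^ edgeCount H :=
          (Real.rpow_inv_natCast_pow tU0 he0).symm
      _ ≤ A ^ edgeCount H := by
          apply pow_le_pow_left₀ (Real.rpow_nonneg tU0 _)
          rw [hAdef]; linarith
  have hWB : homDensity H W ≤ B ^ edgeCount H := by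
    calc homDensity H W = (homDensity H W ^ ((edgeCount H : ℝ)⁻¹)) ^ edgeCount H :=
          (Real.rpow_inv_natCast_pow tW0 he0).symm
      _ ≤ B ^ edgeCount H := by
          apply pow_le_pow_left₀ (Real.rpow_nonneg tW0 _)
          rw [hBdef]; linarith
  set l : ℝ := A / (A + B) with hldef
  have hl0 : 0 ≤ l := div_nonneg hA.le hAB.le
  have hl1 : l ≤ 1 := (div_le_one hAB).2 (by linarith)
  have hl1' : 1 - l = B / (A + B) := by
    rw [hldef]; field_simp; ring
  set U1 : ℝ → ℝ → ℝ := fun x y => A⁻¹ * U x y with hU1def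
  set W1 : ℝ → ℝ → ℝ := fun x y => B⁻¹ * W x y with hW1def
  have hU1m : Measurable (Function.uncurry U1) := by
    have : Measurable fun p : ℝ × ℝ => A⁻¹ * Function.uncurry U p := hUm.const_mul _
    exact this
  have hW1m : Measurable (Function.uncurry W1) := by
    have : Measurable fun p : ℝ × ℝ => B⁻¹ * Function.uncurry W p := hWm.const_mul _
    exact this
  set C : ℝ := max 1 (max (A⁻¹ * CU) (B⁻¹ * CW)) with hCdef
  have hC1 : (1 : ℝ) ≤ C := le_max_left _ _
  have hCU1 : ∀ x y, U1 x y ≤ C := fun x y =>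
    le_trans (mul_le_mul_of_nonneg_left (hCU x y) (inv_nonneg.2 hA.le))
      (le_trans (le_max_left _ _) (le_max_right _ _))
  have hCW1 : ∀ x y, W1 x y ≤ C := fun x y =>
    le_trans (mul_le_mul_of_nonneg_left (hCW x y) (inv_nonneg.2 hB.le))
      (le_trans (le_max_right _ _) (le_max_right _ _))
  have key : (fun x y => U x y + W x y)
      = fun x y => (A + B) * (l * U1 x y + (1 - l) * W1 x y) := by
    funext x y
    rw [hl1']
    simp only [hU1def, hW1def, hldef]
    field_simp
  have hcx := homDensity_convex_ext H hcvx hU1m hW1m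
    (fun x y => by simp [hU1def, hUs x y]) (fun x y => by simp [hW1def, hWs x y])
    (fun x y => mul_nonneg (inv_nonneg.2 hA.le) (hU0 x y))
    (fun x y => mul_nonneg (inv_nonneg.2 hB.le) (hW0 x y))
    hC1 hCU1 hCW1 (l := l) ⟨hl0, hl1⟩
  have hU1eq : homDensity H U1 = A⁻¹ ^ edgeCount H * homDensity H U :=
    homDensity_const_mul H A⁻¹ U
  have hU1le : homDensity H U1 ≤ 1 := by
    rw [hU1eq]
    calc A⁻¹ ^ edgeCount H * homDensity H U ≤ A⁻¹ ^ edgeCount H * A ^ edgeCount H :=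
          mul_le_mul_of_nonneg_left hUA (by positivity)
      _ = 1 := by rw [← mul_pow, inv_mul_cancel₀ hA.ne', one_pow]
  have hW1eq : homDensity H W1 = B⁻¹ ^ edgeCount H * homDensity H W :=
    homDensity_const_mul H B⁻¹ W
  have hW1le : homDensity H W1 ≤ 1 := by
    rw [hW1eq]
    calc B⁻¹ ^ edgeCount H * homDensity H W ≤ B⁻¹ ^ edgeCount H * B ^ edgeCount H :=
          mul_le_mul_of_nonneg_left hWB (by positivity)
      _ = 1 := by rw [← mul_pow, inv_mul_cancel₀ hB.ne', one_pow]
  have hmixle : homDensity H (fun x y => l * U1 x y + (1 - l) * W1 x y) ≤ 1 := by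
    refine hcx.trans ?_
    calc l * homDensity H U1 + (1 - l) * homDensity H W1
        ≤ l * 1 + (1 - l) * 1 :=
          add_le_add (mul_le_mul_of_nonneg_left hU1le hl0)
            (mul_le_mul_of_nonneg_left hW1le (by linarith))
      _ = 1 := by ring
  have hmix0 : 0 ≤ homDensity H (fun x y => l * U1 x y + (1 - l) * W1 x y) :=
    homDensity_nonneg H fun x y =>
      add_nonneg (mul_nonneg hl0 (mul_nonneg (inv_nonneg.2 hA.le) (hU0 x y)))
        (mul_nonneg (by linarith) (mul_nonneg (inv_nonneg.2 hB.le) (hW0 x y)))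
  have hfinal : homDensity H (fun x y => U x y + W x y) ≤ (A + B) ^ edgeCount H := by
    rw [key, homDensity_const_mul]
    calc (A + B) ^ edgeCount H * homDensity H (fun x y => l * U1 x y + (1 - l) * W1 x y)
        ≤ (A + B) ^ edgeCount H * 1 :=
          mul_le_mul_of_nonneg_left hmixle (by positivity)
      _ = (A + B) ^ edgeCount H := mul_one _
  have hS0 : 0 ≤ homDensity H (fun x y => U x y + W x y) :=
    homDensity_nonneg H fun x y => add_nonneg (hU0 x y) (hW0 x y)
  calc homDensity H (fun x y => U x y + W x y) ^ ((edgeCount H : ℝ)⁻¹)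
      ≤ ((A + B) ^ edgeCount H) ^ ((edgeCount H : ℝ)⁻¹) :=
        Real.rpow_le_rpow hS0 hfinal (by positivity)
    _ = A + B := Real.pow_rpow_inv_natCast hAB.le he0
    _ = homDensity H U ^ ((edgeCount H : ℝ)⁻¹) +
          homDensity H W ^ ((edgeCount H : ℝ)⁻¹) + ε := by
        rw [hAdef, hBdef]; ring

end ConvexHelpers

-- STATEMENT 3
theorem weaklyNorming_iff_convex {V : Type} [Fintype V] [LinearOrder V]
    (H : SimpleGraph V) [DecidableRel H.Adj] (he : 1 ≤ edgeCount H) :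
    WeaklyNorming H ↔
      ∀ W₁ W₂ : ℝ → ℝ → ℝ, IsGraphon W₁ → IsGraphon W₂ →
        ∀ l : ℝ, l ∈ Set.Icc (0 : ℝ) 1 →
          homDensity H (fun x y => l * W₁ x y + (1 - l) * W₂ x y) ≤
            l * homDensity H W₁ + (1 - l) * homDensity H W₂ := by
  have he0 : edgeCount H ≠ 0 := Nat.one_le_iff_ne_zero.mp he
  constructor
  · -- weakly norming → convex
    intro hWN W₁ W₂ h₁ h₂ l hl
    obtain ⟨hl0, hl1⟩ := hl
    obtain ⟨h₁m, h₁s, h₁b⟩ := h₁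
    obtain ⟨h₂m, h₂s, h₂b⟩ := h₂
    have hk1 : IsKernel (fun x y => l * W₁ x y) := by
      refine ⟨?_, fun x y => by simp only [h₁s x y], 1, fun x y => ?_⟩
      · have : Measurable fun p : ℝ × ℝ => l * Function.uncurry W₁ p := h₁m.const_mul _
        exact this
      · rw [abs_mul]
        calc |l| * |W₁ x y| ≤ 1 * 1 := by
              apply mul_le_mul _ _ (abs_nonneg _) zero_le_one
              · rw [abs_of_nonneg hl0]; exact hl1
              · rw [abs_of_nonneg (h₁b x y).1]; exact (h₁b x y).2
          _ = 1 := mul_one 1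
    have hk2 : IsKernel (fun x y => (1 - l) * W₂ x y) := by
      refine ⟨?_, fun x y => by simp only [h₂s x y], 1, fun x y => ?_⟩
      · have : Measurable fun p : ℝ × ℝ => (1 - l) * Function.uncurry W₂ p := h₂m.const_mul _
        exact this
      · rw [abs_mul]
        calc |1 - l| * |W₂ x y| ≤ 1 * 1 := by
              apply mul_le_mul _ _ (abs_nonneg _) zero_le_one
              · rw [abs_of_nonneg (by linarith)]; linarith
              · rw [abs_of_nonneg (h₂b x y).1]; exact (h₂b x y).2
          _ = 1 := mul_one 1
    have h := hWN _ _ hk1 hk2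
    have e1 : (fun x y => |l * W₁ x y + (1 - l) * W₂ x y|)
        = fun x y => l * W₁ x y + (1 - l) * W₂ x y := by
      funext x y
      exact abs_of_nonneg (add_nonneg (mul_nonneg hl0 (h₁b x y).1)
        (mul_nonneg (by linarith) (h₂b x y).1))
    have e2 : (fun x y => |l * W₁ x y|) = fun x y => l * W₁ x y := by
      funext x y
      exact abs_of_nonneg (mul_nonneg hl0 (h₁b x y).1)
    have e3 : (fun x y => |(1 - l) * W₂ x y|) = fun x y => (1 - l) * W₂ x y := by
      funext x y
      exact abs_of_nonneg (mul_nonneg (by linarith) (h₂b x y).1)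
    rw [e1, e2, e3, homDensity_const_mul, homDensity_const_mul] at h
    have t₁0 : 0 ≤ homDensity H W₁ := homDensity_nonneg H fun x y => (h₁b x y).1
    have t₂0 : 0 ≤ homDensity H W₂ := homDensity_nonneg H fun x y => (h₂b x y).1
    rw [Real.mul_rpow (pow_nonneg hl0 _) t₁0,
      Real.mul_rpow (pow_nonneg (by linarith : (0:ℝ) ≤ 1 - l) _) t₂0,
      Real.pow_rpow_inv_natCast hl0 he0,
      Real.pow_rpow_inv_natCast (by linarith : (0:ℝ) ≤ 1 - l) he0] at h
    have hmix0 : 0 ≤ homDensity H (fun x y => l * W₁ x y + (1 - l) * W₂ x y) :=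
      homDensity_nonneg H fun x y => add_nonneg (mul_nonneg hl0 (h₁b x y).1)
        (mul_nonneg (by linarith) (h₂b x y).1)
    have hcv := (convexOn_pow (𝕜 := ℝ) (edgeCount H)).2
      (Set.mem_Ici.2 (Real.rpow_nonneg t₁0 ((edgeCount H : ℝ)⁻¹)))
      (Set.mem_Ici.2 (Real.rpow_nonneg t₂0 ((edgeCount H : ℝ)⁻¹)))
      hl0 (by linarith : (0:ℝ) ≤ 1 - l) (by ring)
    simp only [smul_eq_mul] at hcv
    calc homDensity H (fun x y => l * W₁ x y + (1 - l) * W₂ x y)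
        = (homDensity H (fun x y => l * W₁ x y + (1 - l) * W₂ x y) ^
            ((edgeCount H : ℝ)⁻¹)) ^ edgeCount H :=
          (Real.rpow_inv_natCast_pow hmix0 he0).symm
      _ ≤ (l * homDensity H W₁ ^ ((edgeCount H : ℝ)⁻¹) +
            (1 - l) * homDensity H W₂ ^ ((edgeCount H : ℝ)⁻¹)) ^ edgeCount H :=
          pow_le_pow_left₀ (Real.rpow_nonneg hmix0 _) h _
      _ ≤ l * (homDensity H W₁ ^ ((edgeCount H : ℝ)⁻¹)) ^ edgeCount H +
            (1 - l) * (homDensity H W₂ ^ ((edgeCount H : ℝ)⁻¹)) ^ edgeCount H := hcv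
      _ = l * homDensity H W₁ + (1 - l) * homDensity H W₂ := by
          rw [Real.rpow_inv_natCast_pow t₁0 he0, Real.rpow_inv_natCast_pow t₂0 he0]
  · -- convex → weakly norming
    intro hcvx U W hU hW
    obtain ⟨hUm, hUs, CU, hCU⟩ := hU
    obtain ⟨hWm, hWs, CW, hCW⟩ := hW
    have hCU0 : 0 ≤ CU := le_trans (abs_nonneg _) (hCU 0 0)
    have hCW0 : 0 ≤ CW := le_trans (abs_nonneg _) (hCW 0 0)
    have hAm : Measurable (Function.uncurry fun x y => |U x y + W x y|) := by
      have : Measurable fun p : ℝ × ℝ => |Function.uncurry U p + Function.uncurry W p| :=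
        (hUm.add hWm).abs
      exact this
    have hBm : Measurable (Function.uncurry fun x y => |U x y| + |W x y|) := by
      have : Measurable fun p : ℝ × ℝ => |Function.uncurry U p| + |Function.uncurry W p| :=
        (hUm.abs.add hWm.abs)
      exact this
    have hmono : homDensity H (fun x y => |U x y + W x y|) ≤
        homDensity H (fun x y => |U x y| + |W x y|) := by
      apply homDensity_mono H hAm hBm (CU := CU + CW) (CW := CU + CW)
      · intro x y
        rw [abs_abs]
        exact le_trans (abs_add_le _ _) (add_le_add (hCU x y) (hCW x y))
      · intro x y
        rw [abs_of_nonneg (add_nonneg (abs_nonneg _) (abs_nonneg _))]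
        exact add_le_add (hCU x y) (hCW x y)
      · intro x y; exact abs_nonneg _
      · intro x y; exact abs_add_le _ _
    have hsub := homDensity_subadd H he hcvx
      (U := fun x y => |U x y|) (W := fun x y => |W x y|)
      (by have : Measurable fun p : ℝ × ℝ => |Function.uncurry U p| := hUm.abs; exact this)
      (by have : Measurable fun p : ℝ × ℝ => |Function.uncurry W p| := hWm.abs; exact this)
      (fun x y => by simp only [hUs x y]) (fun x y => by simp only [hWs x y])
      (fun x y => abs_nonneg _) (fun x y => abs_nonneg _)
      (CU := CU) (CW := CW) hCU hCW
    have h0 : 0 ≤ homDensity H (fun x y => |U x y + W x y|) :=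
      homDensity_nonneg H fun x y => abs_nonneg _
    calc homDensity H (fun x y => |U x y + W x y|) ^ ((edgeCount H : ℝ)⁻¹)
        ≤ homDensity H (fun x y => |U x y| + |W x y|) ^ ((edgeCount H : ℝ)⁻¹) :=
          Real.rpow_le_rpow h0 hmono (by positivity)
      _ ≤ homDensity H (fun x y => |U x y|) ^ ((edgeCount H : ℝ)⁻¹) +
            homDensity H (fun x y => |W x y|) ^ ((edgeCount H : ℝ)⁻¹) := hsub
end

section
/- For every integer k > 4, the graph C_k^⋈ contains an edge e = xy such that the set N*(e) of vertices that are adjacent to x or to y but are distinct from x and y induces exactly one edge; equivalently, e is contained in exactly one 4-cycle of C_k^⋈. -/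
open MeasureTheory

lemma cb_adj (k : ℕ) (p q : Fin k × Fin 2) : (cycleBowtie k).Adj p q ↔ p.2 ≠ q.2 ∧
    (p.1 = q.1 ∨ ((p.1 : ℕ) + 1) % k = (q.1 : ℕ) ∨ ((q.1 : ℕ) + 1) % k = (p.1 : ℕ)) :=
  Iff.rfl

lemma succ_mod_char' (k u : ℕ) (hu : u < k) :
    (u + 1) % k = u + 1 ∨ (u + 1 = k ∧ (u + 1) % k = 0) := by
  rcases Nat.lt_or_ge (u + 1) k with h | h
  · exact Or.inl (Nat.mod_eq_of_lt h)
  · have h' : u + 1 = k := by omega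
    exact Or.inr ⟨h', by rw [h', Nat.mod_self]⟩

lemma cbChar (k : ℕ) (hk : 4 < k) (h0k : (0:ℕ) < k) (h1k : (1:ℕ) < k)
    (c : Fin k × Fin 2)
    (hcx : c ≠ (⟨0, h0k⟩, (0 : Fin 2))) (hcy : c ≠ (⟨1, h1k⟩, (1 : Fin 2)))
    (hadj : (cycleBowtie k).Adj (⟨0, h0k⟩, (0 : Fin 2)) c ∨
            (cycleBowtie k).Adj (⟨1, h1k⟩, (1 : Fin 2)) c) :
    (((c.1 : ℕ) = 0 ∧ (c.2 : ℕ) = 1) ∨ ((c.1 : ℕ) = k - 1 ∧ (c.2 : ℕ) = 1) ∨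
     ((c.1 : ℕ) = 1 ∧ (c.2 : ℕ) = 0) ∨ ((c.1 : ℕ) = 2 ∧ (c.2 : ℕ) = 0)) := by
  have hm1 : (0 + 1) % k = 1 := Nat.mod_eq_of_lt (by omega)
  have hm2 : (1 + 1) % k = 2 := Nat.mod_eq_of_lt (by omega)
  have hc2 : (c.2 : ℕ) < 2 := c.2.2
  have hc1 : (c.1 : ℕ) < k := c.1.2
  have hcx' : ¬((c.1 : ℕ) = 0 ∧ (c.2 : ℕ) = 0) := by
    rintro ⟨h1, h2⟩; exact hcx (Prod.ext (Fin.ext h1) (Fin.ext h2))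
  have hcy' : ¬((c.1 : ℕ) = 1 ∧ (c.2 : ℕ) = 1) := by
    rintro ⟨h1, h2⟩; exact hcy (Prod.ext (Fin.ext h1) (Fin.ext h2))
  rcases hadj with ⟨hne, hor⟩ | ⟨hne, hor⟩
  · have hci : (c.2 : ℕ) = 1 := by
      have : ((0 : Fin 2) : ℕ) ≠ (c.2 : ℕ) := fun h => hne (Fin.ext h)
      simp at this; omega
    rcases hor with h | h | h
    · have h' : (0 : ℕ) = (c.1 : ℕ) := congrArg Fin.val h
      exact Or.inl ⟨h'.symm, hci⟩
    · simp only [] at h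
      rw [hm1] at h
      omega
    · simp only [] at h
      rcases succ_mod_char' k (c.1 : ℕ) hc1 with hh | ⟨hh, _⟩
      · omega
      · exact Or.inr (Or.inl ⟨by omega, hci⟩)
  · have hci : (c.2 : ℕ) = 0 := by
      have : ((1 : Fin 2) : ℕ) ≠ (c.2 : ℕ) := fun h => hne (Fin.ext h)
      simp at this; omega
    rcases hor with h | h | h
    · have h' : (1 : ℕ) = (c.1 : ℕ) := congrArg Fin.val h
      exact Or.inr (Or.inr (Or.inl ⟨h'.symm, hci⟩))
    · simp only [] at h
      rw [hm2] at h
      omega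
    · simp only [] at h
      rcases succ_mod_char' k (c.1 : ℕ) hc1 with hh | ⟨hh, _⟩
      · omega
      · omega

-- STATEMENT 6
theorem cycleBowtie_edge_in_unique_C4 (k : ℕ) (hk : 4 < k) :
    ∃ x y : Fin k × Fin 2, (cycleBowtie k).Adj x y ∧
      ∃ a b : Fin k × Fin 2,
        (a ≠ x ∧ a ≠ y ∧ ((cycleBowtie k).Adj x a ∨ (cycleBowtie k).Adj y a)) ∧
        (b ≠ x ∧ b ≠ y ∧ ((cycleBowtie k).Adj x b ∨ (cycleBowtie k).Adj y b)) ∧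
        (cycleBowtie k).Adj a b ∧
        ∀ c d : Fin k × Fin 2,
          (c ≠ x ∧ c ≠ y ∧ ((cycleBowtie k).Adj x c ∨ (cycleBowtie k).Adj y c)) →
          (d ≠ x ∧ d ≠ y ∧ ((cycleBowtie k).Adj x d ∨ (cycleBowtie k).Adj y d)) →
          (cycleBowtie k).Adj c d →
          ((c = a ∧ d = b) ∨ (c = b ∧ d = a)) := by
  have h0k : (0:ℕ) < k := by omega
  have h1k : (1:ℕ) < k := by omega
  have hm1 : (0 + 1) % k = 1 := Nat.mod_eq_of_lt (by omega)
  have hm2 : (1 + 1) % k = 2 := Nat.mod_eq_of_lt (by omega)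
  have hm3 : (2 + 1) % k = 3 := Nat.mod_eq_of_lt (by omega)
  have hmk : ((k - 1) + 1) % k = 0 := by
    have h : k - 1 + 1 = k := by omega
    rw [h, Nat.mod_self]
  refine ⟨(⟨0, h0k⟩, 0), (⟨1, h1k⟩, 1), ⟨by simp, Or.inr (Or.inl (by simpa using hm1))⟩,
    (⟨0, h0k⟩, 1), (⟨1, h1k⟩, 0),
    ⟨by simp, by simp [Prod.ext_iff, Fin.ext_iff], Or.inl ⟨by simp, Or.inl rfl⟩⟩,
    ⟨by simp [Prod.ext_iff, Fin.ext_iff], by simp, Or.inr ⟨by simp, Or.inl rfl⟩⟩,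
    ⟨by simp, Or.inr (Or.inl (by simpa using hm1))⟩, ?_⟩
  rintro c d ⟨hcx, hcy, hcadj⟩ ⟨hdx, hdy, hdadj⟩ hcd
  have hcC := cbChar k hk h0k h1k c hcx hcy hcadj
  have hdC := cbChar k hk h0k h1k d hdx hdy hdadj
  rw [cb_adj] at hcd
  obtain ⟨hne, hor⟩ := hcd
  have hne' : (c.2 : ℕ) ≠ (d.2 : ℕ) := fun h => hne (Fin.ext h)
  have goal1 : ((c.1 : ℕ) = 0 ∧ (c.2 : ℕ) = 1 ∧ (d.1 : ℕ) = 1 ∧ (d.2 : ℕ) = 0) ∨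
      ((c.1 : ℕ) = 1 ∧ (c.2 : ℕ) = 0 ∧ (d.1 : ℕ) = 0 ∧ (d.2 : ℕ) = 1) := by
    rcases hor with h | h | h
    on_goal 1 => replace h : (c.1 : ℕ) = (d.1 : ℕ) := congrArg Fin.val h
    all_goals (
      rcases hcC with ⟨h1, h2⟩ | ⟨h1, h2⟩ | ⟨h1, h2⟩ | ⟨h1, h2⟩ <;>
      rcases hdC with ⟨h3, h4⟩ | ⟨h3, h4⟩ | ⟨h3, h4⟩ | ⟨h3, h4⟩ <;>
      rw [h1, h3] at h <;>
      first
      | omega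
      | (rw [hm1] at h; omega)
      | (rw [hm2] at h; omega)
      | (rw [hm3] at h; omega)
      | (rw [hmk] at h; omega))
  rcases goal1 with ⟨h1, h2, h3, h4⟩ | ⟨h1, h2, h3, h4⟩
  · exact Or.inl ⟨Prod.ext (Fin.ext (by simpa using h1)) (Fin.ext (by simpa using h2)),
      Prod.ext (Fin.ext (by simpa using h3)) (Fin.ext (by simpa using h4))⟩
  · exact Or.inr ⟨Prod.ext (Fin.ext (by simpa using h1)) (Fin.ext (by simpa using h2)),
      Prod.ext (Fin.ext (by simpa using h3)) (Fin.ext (by simpa using h4))⟩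
end

section
/- For every integer k > 4 and every vertex subset X of C_k^⋈ such that the subgraph induced by X contains exactly two edges, the set N*(X) = N(X) \ X contains two adjacent vertices (i.e., N*(X) contains an edge of C_k^⋈). -/
open MeasureTheory

open Fin.CommRing

section CBAux

lemma fin_one_ne_zero' (m : ℕ) : (1 : Fin (m+5)) ≠ 0 := by
  intro h
  rw [Fin.ext_iff, Fin.val_one, Fin.val_zero] at h
  omega

lemma fin_two_ne_zero' (m : ℕ) : (2 : Fin (m+5)) ≠ 0 := by
  intro h
  have h2 : ((2 : Fin (m+5)) : ℕ) = 2 := by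
    rw [show (2 : Fin (m+5)) = 1 + 1 by norm_num, Fin.val_add, Fin.val_one]
    exact Nat.mod_eq_of_lt (by omega)
  rw [Fin.ext_iff, h2, Fin.val_zero] at h
  omega

lemma cb_ne_a1 (m : ℕ) (u : Fin (m+5)) : u + 1 ≠ u :=
  fun h => fin_one_ne_zero' m (by linear_combination h)
lemma cb_ne_a2 (m : ℕ) (u : Fin (m+5)) : u + 2 ≠ u :=
  fun h => fin_two_ne_zero' m (by linear_combination h)
lemma cb_ne_a21 (m : ℕ) (u : Fin (m+5)) : u + 2 ≠ u + 1 :=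
  fun h => fin_one_ne_zero' m (by linear_combination h)
lemma cb_ne_s1 (m : ℕ) (u : Fin (m+5)) : u - 1 ≠ u :=
  fun h => fin_one_ne_zero' m (by linear_combination -h)
lemma cb_ne_s1a1 (m : ℕ) (u : Fin (m+5)) : u - 1 ≠ u + 1 :=
  fun h => fin_two_ne_zero' m (by linear_combination -h)

/-- neighbour relation on positions in the cycle -/
def npred (m : ℕ) (a b : Fin (m+5)) : Prop := a = b ∨ a + 1 = b ∨ b + 1 = a

lemma npred_symm (m : ℕ) {a b : Fin (m+5)} (h : npred m a b) : npred m b a := by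
  rcases h with h | h | h
  · exact Or.inl h.symm
  · exact Or.inr (Or.inr h)
  · exact Or.inr (Or.inl h)

lemma fin_succ_iff' (m : ℕ) (u v : Fin (m+5)) :
    ((u : ℕ) + 1) % (m+5) = (v : ℕ) ↔ u + 1 = v := by
  rw [Fin.ext_iff, Fin.val_add, Fin.val_one]

lemma cb_adj_iff (m : ℕ) (p q : Fin (m+5) × Fin 2) :
    (cycleBowtie (m+5)).Adj p q ↔ p.2 ≠ q.2 ∧ npred m p.1 q.1 := by
  show (p.2 ≠ q.2 ∧ (p.1 = q.1 ∨ ((p.1 : ℕ) + 1) % (m+5) = (q.1 : ℕ) ∨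
      ((q.1 : ℕ) + 1) % (m+5) = (p.1 : ℕ))) ↔ _
  rw [fin_succ_iff', fin_succ_iff']
  rfl

lemma cb_endgame (m : ℕ) {X : Set (Fin (m+5) × Fin 2)} (wa wb x y : Fin (m+5))
    (h0 : (wa, (0:Fin 2)) ∉ X) (h1 : (wb, (1:Fin 2)) ∉ X)
    (hx : (x, (1:Fin 2)) ∈ X) (hy : (y, (0:Fin 2)) ∈ X)
    (hax : npred m wa x) (hby : npred m y wb) (hab : npred m wa wb) :
    ∃ a b : Fin (m+5) × Fin 2, a ∉ X ∧ b ∉ X ∧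
      (∃ z ∈ X, (cycleBowtie (m+5)).Adj z a) ∧ (∃ z ∈ X, (cycleBowtie (m+5)).Adj z b) ∧
      (cycleBowtie (m+5)).Adj a b :=
  ⟨(wa, 0), (wb, 1), h0, h1,
    ⟨(x, 1), hx, (cb_adj_iff m _ _).mpr ⟨by simp, npred_symm m hax⟩⟩,
    ⟨(y, 0), hy, (cb_adj_iff m _ _).mpr ⟨by simp, hby⟩⟩,
    (cb_adj_iff m _ _).mpr ⟨by simp, hab⟩⟩

/-- pairs of positions giving an induced edge -/
def cbPairs (m : ℕ) (X : Set (Fin (m+5) × Fin 2)) : Set (Fin (m+5) × Fin (m+5)) :=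
  {ab | (ab.1, (0:Fin 2)) ∈ X ∧ (ab.2, (1:Fin 2)) ∈ X ∧ npred m ab.1 ab.2}

def pairToEdge (m : ℕ) (p : Fin (m+5) × Fin (m+5)) : Sym2 (Fin (m+5) × Fin 2) :=
  s((p.1, (0:Fin 2)), (p.2, (1:Fin 2)))

lemma pairToEdge_injective (m : ℕ) : Function.Injective (pairToEdge m) := by
  rintro ⟨a1, a2⟩ ⟨b1, b2⟩ h
  simp only [pairToEdge, Sym2.eq_iff, Prod.mk.injEq] at h
  rcases h with ⟨⟨h1, -⟩, ⟨h2, -⟩⟩ | ⟨⟨-, h⟩, -⟩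
  · simp [h1, h2]
  · exact absurd h (by decide)

lemma cb_img (m : ℕ) (X : Set (Fin (m+5) × Fin 2)) :
    {e ∈ (cycleBowtie (m+5)).edgeSet | ∀ v ∈ e, v ∈ X} = pairToEdge m '' cbPairs m X := by
  ext e
  induction e using Sym2.ind with
  | _ a b =>
    simp only [Set.mem_setOf_eq, SimpleGraph.mem_edgeSet, Set.mem_image]
    constructor
    · rintro ⟨hadj, hmem⟩
      rw [cb_adj_iff m] at hadj
      obtain ⟨hne, hrel⟩ := hadj
      have ha : a ∈ X := hmem a (Sym2.mem_mk_left a b)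
      have hb : b ∈ X := hmem b (Sym2.mem_mk_right a b)
      have h2 : ∀ i : Fin 2, i = 0 ∨ i = 1 := by decide
      have ea : ∀ i : Fin 2, a.2 = i → (a.1, i) = a := by rintro i rfl; rfl
      have eb : ∀ i : Fin 2, b.2 = i → (b.1, i) = b := by rintro i rfl; rfl
      rcases h2 a.2 with h1 | h1 <;> rcases h2 b.2 with h3 | h3
      · exact absurd (h1.trans h3.symm) hne
      · refine ⟨(a.1, b.1), ⟨?_, ?_, hrel⟩, ?_⟩
        · rwa [ea 0 h1]
        · rwa [eb 1 h3]
        · show s(_, _) = _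
          rw [ea 0 h1, eb 1 h3]
      · refine ⟨(b.1, a.1), ⟨?_, ?_, npred_symm m hrel⟩, ?_⟩
        · rwa [eb 0 h3]
        · rwa [ea 1 h1]
        · show s(_, _) = _
          rw [eb 0 h3, ea 1 h1, Sym2.eq_swap]
      · exact absurd (h1.trans h3.symm) hne
    · rintro ⟨⟨p1, p2⟩, ⟨hp1, hp2, hrel⟩, heq⟩
      rw [pairToEdge, Sym2.eq_iff] at heq
      rcases heq with ⟨h1, h2⟩ | ⟨h1, h2⟩
      · subst h1; subst h2
        refine ⟨(cb_adj_iff m _ _).mpr ⟨by simp, hrel⟩, ?_⟩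
        intro v hv
        rcases Sym2.mem_iff.mp hv with rfl | rfl
        · exact hp1
        · exact hp2
      · subst h1; subst h2
        refine ⟨(cb_adj_iff m _ _).mpr ⟨by simp, npred_symm m hrel⟩, ?_⟩
        intro v hv
        rcases Sym2.mem_iff.mp hv with rfl | rfl
        · exact hp2
        · exact hp1

end CBAux

-- STATEMENT 7
theorem cycleBowtie_nstar_edge (k : ℕ) (hk : 4 < k) (X : Set (Fin k × Fin 2))
    (hX : {e ∈ (cycleBowtie k).edgeSet | ∀ v ∈ e, v ∈ X}.ncard = 2) :
    ∃ a b : Fin k × Fin 2, a ∉ X ∧ b ∉ X ∧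
      (∃ x ∈ X, (cycleBowtie k).Adj x a) ∧ (∃ x ∈ X, (cycleBowtie k).Adj x b) ∧
      (cycleBowtie k).Adj a b := by
  obtain ⟨m, rfl⟩ : ∃ m, k = m + 5 := ⟨k - 5, by omega⟩
  classical
  rw [cb_img, Set.ncard_image_of_injective _ (pairToEdge_injective m)] at hX
  obtain ⟨p, q, hpq, hset⟩ := Set.ncard_eq_two.mp hX
  obtain ⟨u, v⟩ := p
  have hP : ∀ a b : Fin (m+5), (a, (0:Fin 2)) ∈ X → (b, (1:Fin 2)) ∈ X → npred m a b →
      (a, b) = (u, v) ∨ (a, b) = q := by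
    intro a b h1 h2 h3
    have hm : (a, b) ∈ cbPairs m X := ⟨h1, h2, h3⟩
    rw [hset] at hm
    rcases Set.mem_insert_iff.mp hm with h | h
    · exact Or.inl h
    · exact Or.inr h
  have hPp : (u, (0:Fin 2)) ∈ X ∧ (v, (1:Fin 2)) ∈ X ∧ npred m u v := by
    have hm : ((u, v) : Fin (m+5) × Fin (m+5)) ∈ cbPairs m X := by
      rw [hset]; exact Set.mem_insert _ _
    exact hm
  obtain ⟨hu0, hv1, hrel⟩ := hPp
  rcases hrel with hv | hv | hv
  · -- vertical edge: v = u
    subst hv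
    by_cases hA : ((u + 1, (0:Fin 2)) : Fin (m+5) × Fin 2) ∈ X
    · have hq : q = (u + 1, u) := by
        rcases hP (u + 1) u hA hv1 (Or.inr (Or.inr rfl)) with h | h
        · exact absurd (congrArg Prod.fst h) (cb_ne_a1 m u)
        · exact h.symm
      have hB : ((u - 1, (0:Fin 2)) : Fin (m+5) × Fin 2) ∉ X := by
        intro hB
        rcases hP (u - 1) u hB hv1 (Or.inr (Or.inl (by ring))) with h | h
        · exact cb_ne_s1 m u (congrArg Prod.fst h)
        · rw [hq] at h
          exact cb_ne_s1a1 m u (congrArg Prod.fst h)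
      have hC : ((u - 1, (1:Fin 2)) : Fin (m+5) × Fin 2) ∉ X := by
        intro hC
        rcases hP u (u - 1) hu0 hC (Or.inr (Or.inr (by ring))) with h | h
        · exact cb_ne_s1 m u (congrArg Prod.snd h)
        · rw [hq] at h
          exact Ne.symm (cb_ne_a1 m u) (congrArg Prod.fst h)
      exact cb_endgame m (u - 1) (u - 1) u u hB hC hv1 hu0
        (Or.inr (Or.inl (by ring))) (Or.inr (Or.inr (by ring))) (Or.inl rfl)
    · by_cases hA' : ((u + 1, (1:Fin 2)) : Fin (m+5) × Fin 2) ∈ X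
      · have hq : q = (u, u + 1) := by
          rcases hP u (u + 1) hu0 hA' (Or.inr (Or.inl rfl)) with h | h
          · exact absurd (congrArg Prod.snd h) (cb_ne_a1 m u)
          · exact h.symm
        have hB : ((u - 1, (0:Fin 2)) : Fin (m+5) × Fin 2) ∉ X := by
          intro hB
          rcases hP (u - 1) u hB hv1 (Or.inr (Or.inl (by ring))) with h | h
          · exact cb_ne_s1 m u (congrArg Prod.fst h)
          · rw [hq] at h
            exact cb_ne_s1 m u (congrArg Prod.fst h)
        have hC : ((u - 1, (1:Fin 2)) : Fin (m+5) × Fin 2) ∉ X := by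
          intro hC
          rcases hP u (u - 1) hu0 hC (Or.inr (Or.inr (by ring))) with h | h
          · exact cb_ne_s1 m u (congrArg Prod.snd h)
          · rw [hq] at h
            exact cb_ne_s1a1 m u (congrArg Prod.snd h)
        exact cb_endgame m (u - 1) (u - 1) u u hB hC hv1 hu0
          (Or.inr (Or.inl (by ring))) (Or.inr (Or.inr (by ring))) (Or.inl rfl)
      · exact cb_endgame m (u + 1) (u + 1) u u hA hA' hv1 hu0
          (Or.inr (Or.inr rfl)) (Or.inr (Or.inl rfl)) (Or.inl rfl)
  · -- diagonal edge: v = u + 1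
    subst hv
    by_cases hA : ((u, (1:Fin 2)) : Fin (m+5) × Fin 2) ∈ X
    · have hq : q = (u, u) := by
        rcases hP u u hu0 hA (Or.inl rfl) with h | h
        · exact absurd (congrArg Prod.snd h) (Ne.symm (cb_ne_a1 m u))
        · exact h.symm
      have hB : ((u - 1, (0:Fin 2)) : Fin (m+5) × Fin 2) ∉ X := by
        intro hB
        rcases hP (u - 1) u hB hA (Or.inr (Or.inl (by ring))) with h | h
        · exact cb_ne_s1 m u (congrArg Prod.fst h)
        · rw [hq] at h
          exact cb_ne_s1 m u (congrArg Prod.fst h)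
      have hC : ((u - 1, (1:Fin 2)) : Fin (m+5) × Fin 2) ∉ X := by
        intro hC
        rcases hP u (u - 1) hu0 hC (Or.inr (Or.inr (by ring))) with h | h
        · exact cb_ne_s1a1 m u (congrArg Prod.snd h)
        · rw [hq] at h
          exact cb_ne_s1 m u (congrArg Prod.snd h)
      exact cb_endgame m (u - 1) (u - 1) u u hB hC hA hu0
        (Or.inr (Or.inl (by ring))) (Or.inr (Or.inr (by ring))) (Or.inl rfl)
    · by_cases hA' : ((u + 1, (0:Fin 2)) : Fin (m+5) × Fin 2) ∈ X
      · have hq : q = (u + 1, u + 1) := by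
          rcases hP (u + 1) (u + 1) hA' hv1 (Or.inl rfl) with h | h
          · exact absurd (congrArg Prod.fst h) (cb_ne_a1 m u)
          · exact h.symm
        have hB : ((u + 2, (0:Fin 2)) : Fin (m+5) × Fin 2) ∉ X := by
          intro hB
          rcases hP (u + 2) (u + 1) hB hv1 (Or.inr (Or.inr (by ring))) with h | h
          · exact cb_ne_a2 m u (congrArg Prod.fst h)
          · rw [hq] at h
            exact cb_ne_a21 m u (congrArg Prod.fst h)
        have hC : ((u + 2, (1:Fin 2)) : Fin (m+5) × Fin 2) ∉ X := by
          intro hC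
          rcases hP (u + 1) (u + 2) hA' hC (Or.inr (Or.inl (by ring))) with h | h
          · exact cb_ne_a1 m u (congrArg Prod.fst h)
          · rw [hq] at h
            exact cb_ne_a21 m u (congrArg Prod.snd h)
        exact cb_endgame m (u + 2) (u + 2) (u + 1) (u + 1) hB hC hv1 hA'
          (Or.inr (Or.inr (by ring))) (Or.inr (Or.inl (by ring))) (Or.inl rfl)
      · exact cb_endgame m (u + 1) u (u + 1) u hA' hA hv1 hu0
          (Or.inl rfl) (Or.inl rfl) (Or.inr (Or.inr rfl))
  · -- diagonal edge: u = v + 1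
    subst hv
    by_cases hA : ((v + 1, (1:Fin 2)) : Fin (m+5) × Fin 2) ∈ X
    · have hq : q = (v + 1, v + 1) := by
        rcases hP (v + 1) (v + 1) hu0 hA (Or.inl rfl) with h | h
        · exact absurd (congrArg Prod.snd h) (cb_ne_a1 m v)
        · exact h.symm
      have hB : ((v + 2, (0:Fin 2)) : Fin (m+5) × Fin 2) ∉ X := by
        intro hB
        rcases hP (v + 2) (v + 1) hB hA (Or.inr (Or.inr (by ring))) with h | h
        · exact cb_ne_a21 m v (congrArg Prod.fst h)
        · rw [hq] at h
          exact cb_ne_a21 m v (congrArg Prod.fst h)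
      have hC : ((v + 2, (1:Fin 2)) : Fin (m+5) × Fin 2) ∉ X := by
        intro hC
        rcases hP (v + 1) (v + 2) hu0 hC (Or.inr (Or.inl (by ring))) with h | h
        · exact cb_ne_a2 m v (congrArg Prod.snd h)
        · rw [hq] at h
          exact cb_ne_a21 m v (congrArg Prod.snd h)
      exact cb_endgame m (v + 2) (v + 2) (v + 1) (v + 1) hB hC hA hu0
        (Or.inr (Or.inr (by ring))) (Or.inr (Or.inl (by ring))) (Or.inl rfl)
    · by_cases hA' : ((v, (0:Fin 2)) : Fin (m+5) × Fin 2) ∈ X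
      · have hq : q = (v, v) := by
          rcases hP v v hA' hv1 (Or.inl rfl) with h | h
          · exact absurd (congrArg Prod.fst h) (Ne.symm (cb_ne_a1 m v))
          · exact h.symm
        have hB : ((v - 1, (0:Fin 2)) : Fin (m+5) × Fin 2) ∉ X := by
          intro hB
          rcases hP (v - 1) v hB hv1 (Or.inr (Or.inl (by ring))) with h | h
          · exact cb_ne_s1a1 m v (congrArg Prod.fst h)
          · rw [hq] at h
            exact cb_ne_s1 m v (congrArg Prod.fst h)
        have hC : ((v - 1, (1:Fin 2)) : Fin (m+5) × Fin 2) ∉ X := by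
          intro hC
          rcases hP v (v - 1) hA' hC (Or.inr (Or.inr (by ring))) with h | h
          · exact Ne.symm (cb_ne_a1 m v) (congrArg Prod.fst h)
          · rw [hq] at h
            exact cb_ne_s1 m v (congrArg Prod.snd h)
        exact cb_endgame m (v - 1) (v - 1) v v hB hC hv1 hA'
          (Or.inr (Or.inl (by ring))) (Or.inr (Or.inr (by ring))) (Or.inl rfl)
      · exact cb_endgame m v (v + 1) v (v + 1) hA' hA hv1 hu0
          (Or.inl rfl) (Or.inl rfl) (Or.inr (Or.inl rfl))
end

section
/- Let n ≥ 1 and let A ∈ Sym_{2n} be the block matrix [[J_n, −J_n], [−J_n, J_n]], where J_n is the n×n all-ones matrix, and let J_{2n} be the 2n×2n all-ones matrix. Then A is nonzero and, for every norming graph H, the Hessian of P_{H,2n} at A is singular; more precisely, its associated symmetric bilinear form annihilates the direction J_{2n}: for every B ∈ Sym_{2n}, (∂²/∂s∂u) P_{H,2n}(A + sJ_{2n} + uB) |_{s=u=0} = 0. -/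
open MeasureTheory

/-! ### Auxiliary machinery -/

section Aux
open Finset

noncomputable def sgn (n : ℕ) (i : Fin (2*n)) : ℝ := if (i : ℕ) < n then 1 else -1

def flipIdx (n : ℕ) (i : Fin (2*n)) : Fin (2*n) :=
  if h : (i : ℕ) < n then ⟨(i : ℕ) + n, by omega⟩
  else ⟨(i : ℕ) - n, by have := i.isLt; omega⟩

lemma blockMat_eq_sgn (n : ℕ) (i j : Fin (2*n)) : blockMat n i j = sgn n i * sgn n j := by
  unfold blockMat sgn
  by_cases hi : (i : ℕ) < n <;> by_cases hj : (j : ℕ) < n <;> simp [hi, hj]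

lemma sgn_flipIdx (n : ℕ) (i : Fin (2*n)) : sgn n (flipIdx n i) = - sgn n i := by
  unfold sgn flipIdx
  have := i.isLt
  by_cases hi : (i : ℕ) < n <;> simp [hi] <;> omega

lemma flipIdx_flipIdx (n : ℕ) (i : Fin (2*n)) : flipIdx n (flipIdx n i) = i := by
  unfold flipIdx
  have := i.isLt
  by_cases hi : (i : ℕ) < n <;> simp [hi] <;> split <;> (apply Fin.ext; simp) <;> omega

lemma flipIdx_ne (n : ℕ) (hn : 1 ≤ n) (i : Fin (2*n)) : flipIdx n i ≠ i := by
  unfold flipIdx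
  have := i.isLt
  by_cases hi : (i : ℕ) < n <;> simp [hi] <;> intro h <;>
    (have := congrArg Fin.val h; simp at this; omega)

lemma blockMat_flip_left (n : ℕ) (i j : Fin (2*n)) :
    blockMat n (flipIdx n i) j = - blockMat n i j := by
  rw [blockMat_eq_sgn, blockMat_eq_sgn, sgn_flipIdx, neg_mul]

lemma blockMat_flip_right (n : ℕ) (i j : Fin (2*n)) :
    blockMat n i (flipIdx n j) = - blockMat n i j := by
  rw [blockMat_eq_sgn, blockMat_eq_sgn, sgn_flipIdx, mul_neg]

lemma sum_vanish {V : Type} [Fintype V] [DecidableEq V] (n : ℕ) (hn : 1 ≤ n)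
    (S : Finset (V × V)) (hS : ∀ p ∈ S, p.1 ≠ p.2) (w : V)
    (hodd : Odd ((S.filter (fun p => p.1 = w ∨ p.2 = w)).card))
    (c d : V) (hc : c ≠ w) (hd : d ≠ w) (B : Matrix (Fin (2*n)) (Fin (2*n)) ℝ) :
    ∑ φ : V → Fin (2*n),
      (∏ p ∈ S, blockMat n (φ p.1) (φ p.2)) * B (φ c) (φ d) = 0 := by
  classical
  refine Finset.sum_ninvolution (fun φ => Function.update φ w (flipIdx n (φ w)))
    (fun φ => ?_) (fun φ hφ0 => ?_) (fun _ => Finset.mem_univ _) (fun φ => ?_)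
  · -- f φ + f (g φ) = 0
    set ψ := Function.update φ w (flipIdx n (φ w)) with hψ
    have hψw : ∀ v : V, v ≠ w → ψ v = φ v := fun v hv => Function.update_of_ne hv _ _
    have hψat : ψ w = flipIdx n (φ w) := Function.update_self _ _ _
    have hB : B (ψ c) (ψ d) = B (φ c) (φ d) := by rw [hψw c hc, hψw d hd]
    have hprod : (∏ p ∈ S, blockMat n (ψ p.1) (ψ p.2))
        = - ∏ p ∈ S, blockMat n (φ p.1) (φ p.2) := by
      rw [← Finset.prod_filter_mul_prod_filter_not S (fun p => p.1 = w ∨ p.2 = w),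
          ← Finset.prod_filter_mul_prod_filter_not S (fun p => p.1 = w ∨ p.2 = w)
            (fun p => blockMat n (φ p.1) (φ p.2))]
      have h2 : ∏ p ∈ S.filter (fun p => ¬(p.1 = w ∨ p.2 = w)), blockMat n (ψ p.1) (ψ p.2)
          = ∏ p ∈ S.filter (fun p => ¬(p.1 = w ∨ p.2 = w)), blockMat n (φ p.1) (φ p.2) := by
        refine Finset.prod_congr rfl fun p hp => ?_
        obtain ⟨-, hp2⟩ := Finset.mem_filter.mp hp
        push_neg at hp2
        rw [hψw _ hp2.1, hψw _ hp2.2]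
      have h1 : ∏ p ∈ S.filter (fun p => p.1 = w ∨ p.2 = w), blockMat n (ψ p.1) (ψ p.2)
          = ∏ p ∈ S.filter (fun p => p.1 = w ∨ p.2 = w), -blockMat n (φ p.1) (φ p.2) := by
        refine Finset.prod_congr rfl fun p hp => ?_
        obtain ⟨hpS, hp2⟩ := Finset.mem_filter.mp hp
        rcases hp2 with h | h
        · have hp2w : p.2 ≠ w := fun hh => hS p hpS (h.trans hh.symm)
          rw [hψw _ hp2w, h, hψat, ← h, blockMat_flip_left]
        · have hp1w : p.1 ≠ w := fun hh => hS p hpS (hh.trans h.symm)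
          rw [hψw _ hp1w, h, hψat, ← h, blockMat_flip_right]
      rw [h1, h2, Finset.prod_congr rfl
          (fun p _ => (neg_one_mul (blockMat n (φ p.1) (φ p.2))).symm),
        Finset.prod_mul_distrib, Finset.prod_const, hodd.neg_one_pow]
      ring
    rw [hB, hprod]
    ring
  · -- g φ ≠ φ
    intro hEq
    have h2 := congrFun hEq w
    simp only [Function.update_self] at h2
    exact flipIdx_ne n hn (φ w) h2
  · -- involutive
    show Function.update (Function.update φ w (flipIdx n (φ w))) w
        (flipIdx n (Function.update φ w (flipIdx n (φ w)) w)) = φ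
    rw [Function.update_self, Function.update_idem, flipIdx_flipIdx, Function.update_eq_self]

noncomputable def mySign : ℝ → ℝ := fun x => if x < 1/2 then 1 else -1

lemma mySign_measurable : Measurable mySign :=
  Measurable.ite (measurableSet_lt measurable_id measurable_const)
    measurable_const measurable_const

lemma mySign_abs (x : ℝ) : |mySign x| = 1 := by
  unfold mySign; split_ifs <;> simp

lemma mySign_ne_zero (x : ℝ) : mySign x ≠ 0 := by
  unfold mySign; split_ifs <;> norm_num

lemma mySign_pow_odd {d : ℕ} (hd : Odd d) (x : ℝ) : mySign x ^ d = mySign x := by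
  unfold mySign; split_ifs
  · exact one_pow d
  · exact hd.neg_one_pow

lemma integral_mySign : ∫ x in Set.Icc (0:ℝ) 1, mySign x = 0 := by
  have hu : Set.Icc (0:ℝ) 1 = Set.Ico (0:ℝ) (1/2) ∪ Set.Icc (1/2:ℝ) 1 :=
    (Set.Ico_union_Icc_eq_Icc (by norm_num) (by norm_num)).symm
  have hdisj : Disjoint (Set.Ico (0:ℝ) (1/2)) (Set.Icc (1/2:ℝ) 1) := by
    rw [Set.disjoint_left]; rintro x ⟨-, hx⟩ ⟨hx', -⟩; linarith
  have h1 : Set.EqOn mySign (fun _ => (1:ℝ)) (Set.Ico (0:ℝ) (1/2)) := fun x hx => if_pos hx.2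
  have h2 : Set.EqOn mySign (fun _ => (-1:ℝ)) (Set.Icc (1/2:ℝ) 1) :=
    fun x hx => if_neg (not_lt.mpr hx.1)
  have hi1 : MeasureTheory.IntegrableOn mySign (Set.Ico (0:ℝ) (1/2)) := by
    refine ((MeasureTheory.integrableOn_const_iff (C := (1:ℝ))).mpr (Or.inr ?_)).congr_fun
      (fun x hx => (h1 hx).symm) measurableSet_Ico
    rw [Real.volume_Ico]; exact ENNReal.ofReal_lt_top
  have hi2 : MeasureTheory.IntegrableOn mySign (Set.Icc (1/2:ℝ) 1) := by
    refine ((MeasureTheory.integrableOn_const_iff (C := (-1:ℝ))).mpr (Or.inr ?_)).congr_fun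
      (fun x hx => (h2 hx).symm) measurableSet_Icc
    rw [Real.volume_Icc]; exact ENNReal.ofReal_lt_top
  rw [hu, MeasureTheory.setIntegral_union hdisj measurableSet_Icc hi1 hi2,
    MeasureTheory.setIntegral_congr_fun measurableSet_Ico h1,
    MeasureTheory.setIntegral_congr_fun measurableSet_Icc h2,
    MeasureTheory.setIntegral_const, MeasureTheory.setIntegral_const,
    Real.volume_real_Ico, Real.volume_real_Icc]
  norm_num

lemma prod_pair_eq_pow {V : Type} [Fintype V] [DecidableEq V]
    (E : Finset (V × V)) (g : V → ℝ) :
    ∏ p ∈ E, g p.1 * g p.2 =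
      ∏ v : V, g v ^ ((E.filter (fun p => p.1 = v)).card
        + (E.filter (fun p => p.2 = v)).card) := by
  rw [Finset.prod_mul_distrib]
  have h1 : ∏ p ∈ E, g p.1 = ∏ v : V, g v ^ (E.filter (fun p => p.1 = v)).card := by
    rw [← Finset.prod_fiberwise_of_maps_to (t := Finset.univ)
      (g := fun p : V × V => p.1) (fun _ _ => Finset.mem_univ _) (fun p => g p.1)]
    refine Finset.prod_congr rfl fun v _ => ?_
    rw [Finset.prod_congr rfl (fun p hp => congrArg g (Finset.mem_filter.mp hp).2),
      Finset.prod_const]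
  have h2 : ∏ p ∈ E, g p.2 = ∏ v : V, g v ^ (E.filter (fun p => p.2 = v)).card := by
    rw [← Finset.prod_fiberwise_of_maps_to (t := Finset.univ)
      (g := fun p : V × V => p.2) (fun _ _ => Finset.mem_univ _) (fun p => g p.2)]
    refine Finset.prod_congr rfl fun v _ => ?_
    rw [Finset.prod_congr rfl (fun p hp => congrArg g (Finset.mem_filter.mp hp).2),
      Finset.prod_const]
  rw [h1, h2, ← Finset.prod_mul_distrib]
  exact Finset.prod_congr rfl fun v _ => (pow_add _ _ _).symm

lemma integral_pi_icc_prod {V : Type} [Fintype V] (G : V → ℝ → ℝ) :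
    ∫ x : V → ℝ in (Set.univ.pi fun _ : V => Set.Icc (0:ℝ) 1), ∏ v, G v (x v) =
      ∏ v, ∫ t in Set.Icc (0:ℝ) 1, G v t := by
  classical
  have hs : MeasurableSet (Set.univ.pi fun _ : V => Set.Icc (0:ℝ) 1) :=
    MeasurableSet.univ_pi fun _ => measurableSet_Icc
  rw [← MeasureTheory.integral_indicator hs]
  have hind : (Set.univ.pi fun _ : V => Set.Icc (0:ℝ) 1).indicator
      (fun x : V → ℝ => ∏ v, G v (x v)) =
      fun x : V → ℝ => ∏ v, (Set.Icc (0:ℝ) 1).indicator (G v) (x v) := by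
    funext x
    by_cases hx : x ∈ Set.univ.pi fun _ : V => Set.Icc (0:ℝ) 1
    · rw [Set.indicator_of_mem hx]
      exact Finset.prod_congr rfl fun v _ =>
        (Set.indicator_of_mem (hx v (Set.mem_univ v)) _).symm
    · rw [Set.indicator_of_notMem hx]
      rw [Set.mem_univ_pi] at hx
      push_neg at hx
      obtain ⟨v, hv⟩ := hx
      exact (Finset.prod_eq_zero (Finset.mem_univ v) (Set.indicator_of_notMem hv _)).symm
  rw [hind, MeasureTheory.volume_pi, MeasureTheory.integral_fintype_prod_eq_prod
    (fun v => (Set.Icc (0:ℝ) 1).indicator (G v))]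
  exact Finset.prod_congr rfl fun v _ =>
    MeasureTheory.integral_indicator measurableSet_Icc

lemma norming_degrees_even {V : Type} [Fintype V] [LinearOrder V]
    (H : SimpleGraph V) [DecidableRel H.Adj] (hN : Norming H) (v : V) :
    Even (((Finset.univ.filter (fun p : V × V => p.1 < p.2 ∧ H.Adj p.1 p.2)).filter
        (fun p => p.1 = v)).card
      + ((Finset.univ.filter (fun p : V × V => p.1 < p.2 ∧ H.Adj p.1 p.2)).filter
        (fun p => p.2 = v)).card) := by
  classical
  by_contra hodd
  rw [Nat.even_iff, ← Ne, Nat.mod_two_ne_zero, ← Nat.odd_iff] at hodd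
  set W : ℝ → ℝ → ℝ := fun x y => mySign x * mySign y with hW
  have hK : IsKernel W := by
    refine ⟨?_, fun x y => mul_comm _ _, 1, fun x y => ?_⟩
    · have : Function.uncurry W = fun p : ℝ × ℝ => mySign p.1 * mySign p.2 := rfl
      rw [this]
      exact (mySign_measurable.comp measurable_fst).mul (mySign_measurable.comp measurable_snd)
    · rw [abs_mul, mySign_abs, mySign_abs]; norm_num
  have h0 : homDensity H W = 0 := by
    unfold homDensity
    have hptw : ∀ x : V → ℝ,
        (∏ p ∈ Finset.univ.filter (fun p : V × V => p.1 < p.2 ∧ H.Adj p.1 p.2),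
          W (x p.1) (x p.2)) =
        ∏ w : V, mySign (x w) ^
          (((Finset.univ.filter (fun p : V × V => p.1 < p.2 ∧ H.Adj p.1 p.2)).filter
            (fun p => p.1 = w)).card
          + ((Finset.univ.filter (fun p : V × V => p.1 < p.2 ∧ H.Adj p.1 p.2)).filter
            (fun p => p.2 = w)).card) := fun x =>
      prod_pair_eq_pow _ (fun w => mySign (x w))
    rw [MeasureTheory.setIntegral_congr_fun
      (MeasurableSet.univ_pi fun _ => measurableSet_Icc) (fun x _ => hptw x)]
    rw [integral_pi_icc_prod (fun w t => mySign t ^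
      (((Finset.univ.filter (fun p : V × V => p.1 < p.2 ∧ H.Adj p.1 p.2)).filter
        (fun p => p.1 = w)).card
      + ((Finset.univ.filter (fun p : V × V => p.1 < p.2 ∧ H.Adj p.1 p.2)).filter
        (fun p => p.2 = w)).card))]
    refine Finset.prod_eq_zero (Finset.mem_univ v) ?_
    rw [MeasureTheory.setIntegral_congr_fun measurableSet_Icc
      (fun x _ => mySign_pow_odd hodd x), integral_mySign]
  have hae := hN.2 W hK h0
  rw [MeasureTheory.ae_iff] at hae
  have huniv : {p : ℝ × ℝ | ¬ W p.1 p.2 = 0} = Set.univ := by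
    ext p; simp only [Set.mem_setOf_eq, Set.mem_univ, iff_true]
    exact mul_ne_zero (mySign_ne_zero _) (mySign_ne_zero _)
  rw [huniv, MeasureTheory.Measure.restrict_apply_univ] at hae
  have hvol : volume (Set.Icc (0:ℝ) 1 ×ˢ Set.Icc (0:ℝ) 1) = 1 := by
    rw [MeasureTheory.Measure.volume_eq_prod ℝ ℝ, MeasureTheory.Measure.prod_prod,
      Real.volume_Icc]
    norm_num
  rw [hvol] at hae
  exact one_ne_zero hae

lemma triple_sum_zero {V : Type} [Fintype V] [LinearOrder V] (n : ℕ) (hn : 1 ≤ n)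
    (E : Finset (V × V)) (hlt : ∀ p ∈ E, p.1 < p.2)
    (hdeg : ∀ v : V, Even ((E.filter (fun p => p.1 = v)).card
      + (E.filter (fun p => p.2 = v)).card))
    (B : Matrix (Fin (2*n)) (Fin (2*n)) ℝ) :
    ∑ φ : V → Fin (2*n), ∑ e ∈ E, ∑ f ∈ E.erase e,
      (∏ g ∈ (E.erase e).erase f, blockMat n (φ g.1) (φ g.2)) * B (φ f.1) (φ f.2) = 0 := by
  classical
  rw [Finset.sum_comm]
  refine Finset.sum_eq_zero fun e he => ?_
  rw [Finset.sum_comm]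
  refine Finset.sum_eq_zero fun f hf => ?_
  obtain ⟨hfe, hfE⟩ := Finset.mem_erase.mp hf
  have he12 : e.1 < e.2 := hlt e he
  have hf12 : f.1 < f.2 := hlt f hfE
  have hef : e ≠ f := fun h => hfe h.symm
  obtain ⟨w, hwe, hwf1, hwf2⟩ : ∃ w : V, (e.1 = w ∨ e.2 = w) ∧ w ≠ f.1 ∧ w ≠ f.2 := by
    by_cases h1 : e.1 = f.1
    · have h2 : e.2 ≠ f.2 := fun h2 => hef (Prod.ext h1 h2)
      refine ⟨e.2, Or.inr rfl, ?_, h2⟩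
      rw [← h1]
      exact (ne_of_gt he12)
    · by_cases h3 : e.1 = f.2
      · refine ⟨e.2, Or.inr rfl, ?_, ?_⟩
        · intro h4
          rw [← h4, ← h3] at hf12
          exact absurd (he12.trans hf12) (lt_irrefl _)
        · intro h4
          rw [← h4] at h3
          exact absurd h3 (ne_of_lt he12)
      · exact ⟨e.1, Or.inl rfl, h1, h3⟩
  have hSne : ∀ p ∈ (E.erase e).erase f, p.1 ≠ p.2 := fun p hp =>
    ne_of_lt (hlt p (Finset.mem_of_mem_erase (Finset.mem_of_mem_erase hp)))
  have heF : e ∈ E.filter (fun p => p.1 = w ∨ p.2 = w) :=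
    Finset.mem_filter.mpr ⟨he, hwe⟩
  have hSF : ((E.erase e).erase f).filter (fun p => p.1 = w ∨ p.2 = w)
      = (E.filter (fun p => p.1 = w ∨ p.2 = w)).erase e := by
    ext p
    simp only [Finset.mem_filter, Finset.mem_erase]
    constructor
    · rintro ⟨⟨hpf, hpe, hpE⟩, hpw⟩
      exact ⟨hpe, hpE, hpw⟩
    · rintro ⟨hpe, hpE, hpw⟩
      refine ⟨⟨?_, hpe, hpE⟩, hpw⟩
      rintro rfl
      rcases hpw with h | h
      exacts [hwf1 h.symm, hwf2 h.symm]
  have hcard : (E.filter (fun p => p.1 = w ∨ p.2 = w)).card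
      = (E.filter (fun p => p.1 = w)).card + (E.filter (fun p => p.2 = w)).card := by
    rw [Finset.filter_or, Finset.card_union_of_disjoint]
    rw [Finset.disjoint_left]
    rintro p hp1 hp2
    have h1 := (Finset.mem_filter.mp hp1).2
    have h2 := (Finset.mem_filter.mp hp2).2
    exact absurd (h1.trans h2.symm) (ne_of_lt (hlt p (Finset.mem_filter.mp hp1).1))
  have hpos : 0 < (E.filter (fun p => p.1 = w ∨ p.2 = w)).card :=
    Finset.card_pos.mpr ⟨e, heF⟩
  have hodd : Odd ((((E.erase e).erase f).filter (fun p => p.1 = w ∨ p.2 = w)).card) := by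
    rw [hSF, Finset.card_erase_of_mem heF]
    have heven := hdeg w
    rw [Nat.even_iff] at heven
    rw [Nat.odd_iff]
    omega
  exact sum_vanish n hn _ hSne w hodd f.1 f.2 hwf1.symm hwf2.symm B

lemma deriv_part {V : Type} [Fintype V] [DecidableEq V] (n : ℕ)
    (E : Finset (V × V)) (B : Matrix (Fin (2*n)) (Fin (2*n)) ℝ) :
    deriv (fun u : ℝ => deriv (fun s : ℝ =>
      ∑ φ : V → Fin (2*n), ∏ p ∈ E,
        (blockMat n (φ p.1) (φ p.2) + s + u * B (φ p.1) (φ p.2))) 0) 0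
    = ∑ φ : V → Fin (2*n), ∑ e ∈ E, ∑ f ∈ E.erase e,
        (∏ g ∈ (E.erase e).erase f, blockMat n (φ g.1) (φ g.2)) * B (φ f.1) (φ f.2) := by
  have hinner : ∀ u : ℝ,
      HasDerivAt (fun s : ℝ => ∑ φ : V → Fin (2*n), ∏ p ∈ E,
        (blockMat n (φ p.1) (φ p.2) + s + u * B (φ p.1) (φ p.2)))
      (∑ φ : V → Fin (2*n), ∑ e ∈ E, (∏ g ∈ E.erase e,
        (blockMat n (φ g.1) (φ g.2) + (0:ℝ) + u * B (φ g.1) (φ g.2))) • (1:ℝ)) 0 :=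
    fun u => HasDerivAt.fun_sum fun φ _ => HasDerivAt.fun_finsetProd fun p _ =>
      ((hasDerivAt_id (0:ℝ)).const_add _).add_const _
  have hinner' : (fun u : ℝ => deriv (fun s : ℝ =>
      ∑ φ : V → Fin (2*n), ∏ p ∈ E,
        (blockMat n (φ p.1) (φ p.2) + s + u * B (φ p.1) (φ p.2))) 0) =
      fun u : ℝ => ∑ φ : V → Fin (2*n), ∑ e ∈ E, ∏ g ∈ E.erase e,
        (blockMat n (φ g.1) (φ g.2) + u * B (φ g.1) (φ g.2)) := by
    funext u
    rw [(hinner u).deriv]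
    refine Finset.sum_congr rfl fun φ _ => Finset.sum_congr rfl fun e _ => ?_
    rw [smul_eq_mul, mul_one]
    exact Finset.prod_congr rfl fun g _ => by ring
  rw [hinner']
  have houter : HasDerivAt (fun u : ℝ => ∑ φ : V → Fin (2*n), ∑ e ∈ E, ∏ g ∈ E.erase e,
      (blockMat n (φ g.1) (φ g.2) + u * B (φ g.1) (φ g.2)))
      (∑ φ : V → Fin (2*n), ∑ e ∈ E, ∑ f ∈ E.erase e,
        (∏ g ∈ (E.erase e).erase f,
          (blockMat n (φ g.1) (φ g.2) + (0:ℝ) * B (φ g.1) (φ g.2)))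
          • ((1:ℝ) * B (φ f.1) (φ f.2))) 0 :=
    HasDerivAt.fun_sum fun φ _ => HasDerivAt.fun_sum fun e _ =>
      HasDerivAt.fun_finsetProd fun g _ => ((hasDerivAt_id (0:ℝ)).mul_const _).const_add _
  rw [houter.deriv]
  refine Finset.sum_congr rfl fun φ _ => Finset.sum_congr rfl fun e _ =>
    Finset.sum_congr rfl fun f _ => ?_
  rw [smul_eq_mul, one_mul]
  congr 1
  exact Finset.prod_congr rfl fun g _ => by ring

end Aux

-- STATEMENT 11
theorem hessian_singular_at_blockMat (n : ℕ) (hn : 1 ≤ n) :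
    blockMat n ≠ 0 ∧
    ∀ (V : Type) [Fintype V] [LinearOrder V] (H : SimpleGraph V) [DecidableRel H.Adj],
      Norming H →
      ∀ B : Matrix (Fin (2*n)) (Fin (2*n)) ℝ, B.IsSymm →
        deriv (fun u : ℝ => deriv (fun s : ℝ =>
          graphPoly H (blockMat n + s • onesMat (2*n) + u • B)) 0) 0 = 0 := by
  constructor
  · intro h
    have h00 := congrFun (congrFun h ⟨0, by omega⟩) ⟨0, by omega⟩
    rw [Matrix.zero_apply] at h00
    unfold blockMat at h00
    simp at h00
  · intro V _ _ H _ hN B hB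
    classical
    have hentry : ∀ (s u : ℝ) (i j : Fin (2*n)),
        (blockMat n + s • onesMat (2*n) + u • B) i j
          = blockMat n i j + s + u * B i j := by
      intro s u i j
      simp [onesMat, Matrix.add_apply, Matrix.smul_apply, smul_eq_mul, mul_one]
    have hfun : (fun u : ℝ => deriv (fun s : ℝ =>
        graphPoly H (blockMat n + s • onesMat (2*n) + u • B)) 0) =
        fun u : ℝ => deriv (fun s : ℝ =>
          ∑ φ : V → Fin (2*n),
            ∏ p ∈ Finset.univ.filter (fun p : V × V => p.1 < p.2 ∧ H.Adj p.1 p.2),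
              (blockMat n (φ p.1) (φ p.2) + s + u * B (φ p.1) (φ p.2))) 0 := by
      funext u
      congr 1
      funext s
      unfold graphPoly
      exact Finset.sum_congr rfl fun φ _ => Finset.prod_congr rfl fun p _ => hentry s u _ _
    rw [hfun, deriv_part]
    refine triple_sum_zero n hn _ (fun p hp => (Finset.mem_filter.mp hp).2.1) ?_ B
    exact norming_degrees_even H hN
end

section
/- If H is a norming graph, then for every n ≥ 1 the Hessian of P_{H,n} is positive semidefinite at every point of Sym_n: for all A, B ∈ Sym_n, (d²/ds²) P_{H,n}(A + sB) |_{s=0} ≥ 0. -/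
open MeasureTheory

section NormingAuxSection

open Set MeasureTheory

namespace NormingAux

/-! ### Basic lemmas about `graphPoly` -/

section GraphPoly

variable {V : Type} [Fintype V] [LinearOrder V] (H : SimpleGraph V) [DecidableRel H.Adj]

lemma graphPoly_def {n : ℕ} (A : Matrix (Fin n) (Fin n) ℝ) :
    graphPoly H A = ∑ φ : V → Fin n,
      ∏ p ∈ Finset.univ.filter (fun p : V × V => p.1 < p.2 ∧ H.Adj p.1 p.2),
        A (φ p.1) (φ p.2) := rfl

lemma graphPoly_smul {n : ℕ} (c : ℝ) (A : Matrix (Fin n) (Fin n) ℝ) :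
    graphPoly H (c • A) = c ^ edgeCount H * graphPoly H A := by
  rw [graphPoly_def, graphPoly_def, Finset.mul_sum]
  refine Finset.sum_congr rfl fun φ _ => ?_
  simp only [Matrix.smul_apply, smul_eq_mul, Finset.prod_mul_distrib, Finset.prod_const]
  rfl

lemma graphPoly_continuous {n : ℕ} (A B : Matrix (Fin n) (Fin n) ℝ) :
    Continuous fun t : ℝ => graphPoly H (A + t • B) := by
  simp only [graphPoly_def]
  refine continuous_finset_sum _ fun φ _ => continuous_finset_prod _ fun p _ => ?_
  simp only [Matrix.add_apply, Matrix.smul_apply, smul_eq_mul]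
  exact continuous_const.add (continuous_id.mul continuous_const)

lemma graphPoly_ones {n : ℕ} :
    graphPoly H (Matrix.of fun _ _ : Fin n => (1:ℝ)) = (n : ℝ) ^ Fintype.card V := by
  simp [graphPoly_def, Finset.sum_const, Finset.card_univ, Fintype.card_fun]

lemma graphPoly_scale {n : ℕ} (A B : Matrix (Fin n) (Fin n) ℝ) {x : ℝ} (hx : x ≠ 0) :
    graphPoly H (A + x • B) = x ^ edgeCount H * graphPoly H (B + x⁻¹ • A) := by
  rw [← graphPoly_smul]
  congr 1
  rw [smul_add, smul_smul, mul_inv_cancel₀ hx, one_smul, add_comm]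

end GraphPoly

/-! ### Step functions -/

/-- The index of the subinterval of `[0,1)` containing `z`. -/
noncomputable def idx (n : ℕ) (hn : 0 < n) (z : ℝ) : Fin n := ⟨⌊(n:ℝ) * z⌋₊ % n, Nat.mod_lt _ hn⟩

/-- The `i`-th subinterval of `[0,1)`. -/
def box (n : ℕ) (i : Fin n) : Set ℝ := Set.Ico (((i:ℕ):ℝ)/(n:ℝ)) ((((i:ℕ):ℝ)+1)/(n:ℝ))

lemma measurableSet_box {n : ℕ} (i : Fin n) : MeasurableSet (box n i) := measurableSet_Ico

lemma box_subset {n : ℕ} (hn : 0 < n) (i : Fin n) : box n i ⊆ Set.Ico (0:ℝ) 1 := by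
  have hn' : (0:ℝ) < n := Nat.cast_pos.mpr hn
  rintro z ⟨h1, h2⟩
  constructor
  · exact le_trans (div_nonneg (Nat.cast_nonneg _) hn'.le) h1
  · refine lt_of_lt_of_le h2 ?_
    rw [div_le_one hn']
    exact_mod_cast i.is_lt

lemma floor_lt_of_mem {n : ℕ} (hn : 0 < n) {z : ℝ} (hz : z ∈ Set.Ico (0:ℝ) 1) :
    ⌊(n:ℝ) * z⌋₊ < n := by
  have hn' : (0:ℝ) < n := Nat.cast_pos.mpr hn
  rw [Nat.floor_lt (mul_nonneg hn'.le hz.1)]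
  calc (n:ℝ) * z < n * 1 := mul_lt_mul_of_pos_left hz.2 hn'
    _ = n := mul_one _

lemma mem_box_iff_floor {n : ℕ} (hn : 0 < n) (k : ℕ) {z : ℝ} (hz0 : 0 ≤ z) :
    z ∈ Set.Ico ((k:ℝ)/(n:ℝ)) (((k:ℝ)+1)/(n:ℝ)) ↔ ⌊(n:ℝ)*z⌋₊ = k := by
  have hn' : (0:ℝ) < n := Nat.cast_pos.mpr hn
  rw [Set.mem_Ico, div_le_iff₀ hn', lt_div_iff₀ hn',
    Nat.floor_eq_iff (mul_nonneg hn'.le hz0), mul_comm z (n:ℝ)]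

lemma idx_eq_iff {n : ℕ} (hn : 0 < n) (i : Fin n) {z : ℝ} (hz : z ∈ Set.Ico (0:ℝ) 1) :
    idx n hn z = i ↔ z ∈ box n i := by
  rw [Fin.ext_iff]
  show ⌊(n:ℝ) * z⌋₊ % n = (i:ℕ) ↔ _
  rw [Nat.mod_eq_of_lt (floor_lt_of_mem hn hz), box, mem_box_iff_floor hn (i:ℕ) hz.1]

lemma mem_box_idx {n : ℕ} (hn : 0 < n) {z : ℝ} (hz : z ∈ Set.Ico (0:ℝ) 1) :
    z ∈ box n (idx n hn z) := (idx_eq_iff hn _ hz).mp rfl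

lemma stepFn_apply {n : ℕ} (hn : 0 < n) (M : Matrix (Fin n) (Fin n) ℝ) {x y : ℝ}
    (hx : x ∈ Set.Ico (0:ℝ) 1) (hy : y ∈ Set.Ico (0:ℝ) 1) :
    stepFn n M x y = M (idx n hn x) (idx n hn y) := by
  rw [stepFn, dif_pos ⟨hn, hx, hy⟩]
  rfl

lemma stepFn_apply_box {n : ℕ} (hn : 0 < n) (M : Matrix (Fin n) (Fin n) ℝ) (i j : Fin n)
    {x y : ℝ} (hx : x ∈ box n i) (hy : y ∈ box n j) :
    stepFn n M x y = M i j := by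
  have hx0 := box_subset hn i hx
  have hy0 := box_subset hn j hy
  rw [stepFn_apply hn M hx0 hy0, (idx_eq_iff hn i hx0).mpr hx, (idx_eq_iff hn j hy0).mpr hy]

lemma stepFn_add {n : ℕ} (A B : Matrix (Fin n) (Fin n) ℝ) (x y : ℝ) :
    stepFn n (A + B) x y = stepFn n A x y + stepFn n B x y := by
  unfold stepFn
  split
  · simp [Matrix.add_apply]
  · simp

lemma idx_measurable {n : ℕ} (hn : 0 < n) : Measurable (idx n hn) := by
  have hfloor : Measurable fun z : ℝ => ⌊(n:ℝ)*z⌋₊ % n :=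
    (measurable_from_top (f := fun m : ℕ => m % n)).comp
      (Measurable.nat_floor (measurable_const.mul measurable_id))
  apply measurable_to_countable'
  intro k
  have h : idx n hn ⁻¹' {k} = (fun z : ℝ => ⌊(n:ℝ)*z⌋₊ % n) ⁻¹' {(k:ℕ)} := by
    ext z
    simp [idx, Fin.ext_iff]
  rw [h]
  exact hfloor (measurableSet_singleton _)

lemma stepFn_measurable {n : ℕ} (M : Matrix (Fin n) (Fin n) ℝ) :
    Measurable (Function.uncurry (stepFn n M)) := by
  rcases Nat.eq_zero_or_pos n with hn | hn
  · have h : Function.uncurry (stepFn n M) = fun _ => (0:ℝ) := by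
      funext p
      simp [Function.uncurry, stepFn, hn]
    rw [h]; exact measurable_const
  · have heq : Function.uncurry (stepFn n M) = Set.indicator
        ((Set.Ico (0:ℝ) 1) ×ˢ (Set.Ico (0:ℝ) 1))
        (fun p : ℝ × ℝ => M (idx n hn p.1) (idx n hn p.2)) := by
      funext p
      by_cases h : p.1 ∈ Set.Ico (0:ℝ) 1 ∧ p.2 ∈ Set.Ico (0:ℝ) 1
      · rw [Set.indicator_of_mem (Set.mem_prod.mpr h)]
        exact stepFn_apply hn M h.1 h.2
      · rw [Set.indicator_of_notMem (fun hc => h (Set.mem_prod.mp hc))]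
        show stepFn n M p.1 p.2 = 0
        rw [stepFn, dif_neg (fun hc => h ⟨hc.2.1, hc.2.2⟩)]
    rw [heq]
    exact Measurable.indicator
      ((measurable_of_countable (fun q : Fin n × Fin n => M q.1 q.2)).comp
        (((idx_measurable hn).comp measurable_fst).prodMk ((idx_measurable hn).comp measurable_snd)))
      (measurableSet_Ico.prod measurableSet_Ico)

lemma stepFn_isKernel {n : ℕ} (M : Matrix (Fin n) (Fin n) ℝ) (hM : M.IsSymm) :
    IsKernel (stepFn n M) := by
  refine ⟨stepFn_measurable M, ?_, ?_⟩
  · intro x y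
    unfold stepFn
    by_cases h1 : 0 < n ∧ x ∈ Set.Ico (0:ℝ) 1 ∧ y ∈ Set.Ico (0:ℝ) 1
    · rw [dif_pos h1, dif_pos ⟨h1.1, h1.2.2, h1.2.1⟩]
      exact (hM.apply _ _).symm
    · rw [dif_neg h1, dif_neg (fun hc => h1 ⟨hc.1, hc.2.2, hc.2.1⟩)]
  · refine ⟨∑ i : Fin n, ∑ j : Fin n, |M i j|, fun x y => ?_⟩
    have hnn : (0:ℝ) ≤ ∑ i : Fin n, ∑ j : Fin n, |M i j| :=
      Finset.sum_nonneg fun i _ => Finset.sum_nonneg fun j _ => abs_nonneg _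
    have key : ∀ a b : Fin n, |M a b| ≤ ∑ i : Fin n, ∑ j : Fin n, |M i j| := by
      intro a b
      calc |M a b| ≤ ∑ j : Fin n, |M a j| :=
            Finset.single_le_sum (f := fun j => |M a j|) (fun j _ => abs_nonneg _)
              (Finset.mem_univ b)
        _ ≤ ∑ i : Fin n, ∑ j : Fin n, |M i j| :=
            Finset.single_le_sum (f := fun i => ∑ j : Fin n, |M i j|)
              (fun i _ => Finset.sum_nonneg fun j _ => abs_nonneg _) (Finset.mem_univ a)
    unfold stepFn
    split
    · exact key _ _
    · simpa using hnn

lemma volume_box {n : ℕ} (i : Fin n) :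
    volume (box n i) = ENNReal.ofReal ((1:ℝ)/n) := by
  rw [box, Real.volume_Ico]
  congr 1
  rw [div_sub_div_same, add_sub_cancel_left]

lemma volume_pi_box {V : Type} [Fintype V] {n : ℕ} (φ : V → Fin n) :
    volume (Set.univ.pi fun v : V => box n (φ v)) =
      ENNReal.ofReal ((1:ℝ)/n) ^ Fintype.card V := by
  rw [volume_pi_pi]
  simp [volume_box, Finset.prod_const, Finset.card_univ]

lemma homDensity_stepFn {V : Type} [Fintype V] [LinearOrder V] (H : SimpleGraph V)
    [DecidableRel H.Adj] {n : ℕ} (hn : 0 < n) (M : Matrix (Fin n) (Fin n) ℝ) :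
    homDensity H (stepFn n M) = graphPoly H M / (n:ℝ) ^ Fintype.card V := by
  classical
  set E : Finset (V × V) := Finset.univ.filter (fun p : V × V => p.1 < p.2 ∧ H.Adj p.1 p.2)
    with hE
  set cube' : Set (V → ℝ) := Set.univ.pi fun _ : V => Set.Ico (0:ℝ) 1 with hcube'
  have hcube'M : MeasurableSet cube' := MeasurableSet.univ_pi fun _ => measurableSet_Ico
  have hsub : cube' ⊆ Set.univ.pi fun _ : V => Set.Icc (0:ℝ) 1 := fun x hx v hv =>
    Set.Ico_subset_Icc_self (hx v hv)
  have hstep0 : homDensity H (stepFn n M) =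
      ∫ x in (Set.univ.pi fun _ : V => Set.Icc (0:ℝ) 1),
        ∏ p ∈ E, stepFn n M (x p.1) (x p.2) := rfl
  have hstep1 : homDensity H (stepFn n M) =
      ∫ x in cube', ∏ p ∈ E, stepFn n M (x p.1) (x p.2) := by
    rw [hstep0]
    refine MeasureTheory.setIntegral_congr_set ?_
    rw [MeasureTheory.ae_eq_set]
    constructor
    · refine measure_mono_null (?_ : _ ⊆ ⋃ v : V, {x : V → ℝ | x v = 1}) ?_
      · rintro x ⟨hx1, hx2⟩
        have hnall : ¬ ∀ v : V, x v ∈ Set.Ico (0:ℝ) 1 := by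
          intro hall
          exact hx2 (fun v _ => hall v)
        obtain ⟨v, hv⟩ := not_forall.mp hnall
        refine Set.mem_iUnion.mpr ⟨v, ?_⟩
        have h01 := hx1 v (Set.mem_univ v)
        show x v = 1
        rcases eq_or_lt_of_le h01.2 with h | h
        · exact h
        · exact absurd ⟨h01.1, h⟩ hv
      · rw [measure_iUnion_null_iff]
        intro v
        rw [MeasureTheory.volume_pi]
        exact MeasureTheory.Measure.pi_hyperplane _ v 1
    · rw [Set.diff_eq_empty.mpr hsub]
      exact measure_empty
  have key : Set.EqOn (fun x : V → ℝ => ∏ p ∈ E, stepFn n M (x p.1) (x p.2))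
      (fun x : V → ℝ => ∑ φ : V → Fin n,
        Set.indicator (Set.univ.pi fun v : V => box n (φ v))
          (fun _ => ∏ p ∈ E, M (φ p.1) (φ p.2)) x) cube' := by
    intro x hx
    have hx' : ∀ v : V, x v ∈ Set.Ico (0:ℝ) 1 := fun v => hx v (Set.mem_univ v)
    have hL : (∏ p ∈ E, stepFn n M (x p.1) (x p.2)) =
        ∏ p ∈ E, M (idx n hn (x p.1)) (idx n hn (x p.2)) :=
      Finset.prod_congr rfl fun p _ => stepFn_apply hn M (hx' _) (hx' _)
    have hR : (∑ φ : V → Fin n,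
        Set.indicator (Set.univ.pi fun v : V => box n (φ v))
          (fun _ => ∏ p ∈ E, M (φ p.1) (φ p.2)) x) =
        ∏ p ∈ E, M (idx n hn (x p.1)) (idx n hn (x p.2)) := by
      rw [Finset.sum_eq_single (fun v => idx n hn (x v))]
      · rw [Set.indicator_of_mem]
        exact fun v _ => mem_box_idx hn (hx' v)
      · intro φ _ hφ
        rw [Set.indicator_of_notMem]
        intro hmem
        apply hφ
        funext v
        exact ((idx_eq_iff hn (φ v) (hx' v)).mpr (hmem v (Set.mem_univ v))).symm
      · intro h
        exact absurd (Finset.mem_univ _) h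
    exact hL.trans hR.symm
  have hint : ∀ φ : V → Fin n, MeasureTheory.Integrable
      (Set.indicator (Set.univ.pi fun v : V => box n (φ v))
        (fun _ => ∏ p ∈ E, M (φ p.1) (φ p.2))) (volume.restrict cube') := by
    intro φ
    have hbm : MeasurableSet (Set.univ.pi fun v : V => box n (φ v)) :=
      MeasurableSet.univ_pi fun v => measurableSet_box _
    rw [MeasureTheory.integrable_indicator_iff hbm]
    refine (MeasureTheory.integrableOn_const_iff).mpr (Or.inr ?_)
    rw [MeasureTheory.Measure.restrict_apply hbm]
    refine lt_of_le_of_lt (measure_mono Set.inter_subset_left) ?_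
    rw [volume_pi_box φ]
    exact ENNReal.pow_lt_top ENNReal.ofReal_lt_top
  have hstep2 : (∫ x in cube', ∏ p ∈ E, stepFn n M (x p.1) (x p.2)) =
      ∑ φ : V → Fin n, (∏ p ∈ E, M (φ p.1) (φ p.2)) * ((1:ℝ)/n) ^ Fintype.card V := by
    rw [MeasureTheory.setIntegral_congr_fun hcube'M key,
      MeasureTheory.integral_finset_sum _ (fun φ _ => hint φ)]
    refine Finset.sum_congr rfl fun φ _ => ?_
    have hbm : MeasurableSet (Set.univ.pi fun v : V => box n (φ v)) :=
      MeasurableSet.univ_pi fun v => measurableSet_box _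
    have hbsub : (Set.univ.pi fun v : V => box n (φ v)) ⊆ cube' := fun x hx v hv =>
      box_subset hn _ (hx v hv)
    rw [MeasureTheory.setIntegral_indicator hbm,
      Set.inter_eq_self_of_subset_right hbsub,
      MeasureTheory.setIntegral_const, measureReal_def, volume_pi_box φ, smul_eq_mul, mul_comm]
    congr 1
    rw [ENNReal.toReal_pow, ENNReal.toReal_ofReal (by positivity)]
  rw [hstep1, hstep2, ← Finset.sum_mul, one_div, inv_pow, div_eq_mul_inv]
  rfl

lemma eq_zero_of_stepFn_ae_zero {n : ℕ} (hn : 0 < n) (M : Matrix (Fin n) (Fin n) ℝ)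
    (h : ∀ᵐ p : ℝ × ℝ ∂(volume.restrict (Set.Icc (0:ℝ) 1 ×ˢ Set.Icc (0:ℝ) 1)),
        stepFn n M p.1 p.2 = 0) : M = 0 := by
  ext i j
  rw [Matrix.zero_apply]
  by_contra hij
  rw [MeasureTheory.ae_restrict_iff' (measurableSet_Icc.prod measurableSet_Icc),
    MeasureTheory.ae_iff] at h
  have hsub : box n i ×ˢ box n j ⊆
      {p : ℝ × ℝ | ¬ (p ∈ Set.Icc (0:ℝ) 1 ×ˢ Set.Icc (0:ℝ) 1 → stepFn n M p.1 p.2 = 0)} := by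
    rintro ⟨x, y⟩ ⟨hx, hy⟩
    intro hcon
    apply hij
    rw [← stepFn_apply_box hn M i j hx hy]
    exact hcon ⟨Set.Ico_subset_Icc_self (box_subset hn i hx),
      Set.Ico_subset_Icc_self (box_subset hn j hy)⟩
  have h0 : volume (box n i ×ˢ box n j) = 0 := measure_mono_null hsub h
  rw [MeasureTheory.Measure.volume_eq_prod, MeasureTheory.Measure.prod_prod,
    volume_box, volume_box] at h0
  have hne : ENNReal.ofReal ((1:ℝ)/n) ≠ 0 := by
    refine (ENNReal.ofReal_pos.mpr ?_).ne'
    positivity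
  exact mul_ne_zero hne hne h0

lemma nonneg_of_monotone_hasDerivAt {g : ℝ → ℝ} {d x : ℝ} (hm : Monotone g)
    (h : HasDerivAt g d x) : 0 ≤ d := by
  have ht : Filter.Tendsto (slope g x) (nhdsWithin x {x}ᶜ) (nhds d) :=
    hasDerivAt_iff_tendsto_slope.mp h
  have ht' : Filter.Tendsto (slope g x) (nhdsWithin x (Set.Ioi x)) (nhds d) :=
    ht.mono_left (nhdsWithin_mono x fun y hy => by simpa using ne_of_gt hy)
  refine ge_of_tendsto ht' ?_
  filter_upwards [self_mem_nhdsWithin] with y hy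
  rw [slope_def_field]
  exact div_nonneg (sub_nonneg.mpr (hm (le_of_lt hy))) (sub_nonneg.mpr (le_of_lt hy))

lemma exists_inv_small (g : ℝ → ℝ) (hg : Continuous g) {c : ℝ} (hgc : g 0 = c) (hc : c ≠ 0) :
    ∃ x : ℝ, 1 ≤ x ∧ ∀ y : ℝ, |y| ≤ x⁻¹ → |g y - c| < |c| / 2 := by
  obtain ⟨ε, hε, hball⟩ := Metric.continuousAt_iff.mp hg.continuousAt (|c|/2) (by positivity)
  refine ⟨ε⁻¹ + 1, le_add_of_nonneg_left (by positivity), fun y hy => ?_⟩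
  have hlt : (ε⁻¹ + 1)⁻¹ < ε := by
    rw [inv_lt_comm₀ (by positivity) hε]
    exact lt_add_one _
  have hdist : dist y 0 < ε := by
    rw [Real.dist_eq, sub_zero]
    exact lt_of_le_of_lt hy hlt
  have hb := hball hdist
  rwa [Real.dist_eq, hgc] at hb

/-- The all-ones matrix. -/
def onesM (n : ℕ) : Matrix (Fin n) (Fin n) ℝ := Matrix.of fun _ _ => 1

lemma onesM_symm {n : ℕ} : (onesM n).IsSymm := by
  ext i j
  simp [onesM, Matrix.transpose_apply]

/-- The sign matrix `[[1,-1],[-1,1]]`. -/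
def sgnM : Matrix (Fin 2) (Fin 2) ℝ := Matrix.of fun i j => if i = j then 1 else -1

lemma sgnM_symm : sgnM.IsSymm := by
  ext i j
  simp only [sgnM, Matrix.transpose_apply, Matrix.of_apply]
  by_cases h : i = j
  · subst h; rfl
  · rw [if_neg h, if_neg (fun hh => h hh.symm)]

section NormingLemmas

variable {V : Type} [Fintype V] [LinearOrder V] (H : SimpleGraph V) [DecidableRel H.Adj]

lemma graphPoly_onesM {n : ℕ} :
    graphPoly H (onesM n) = (n : ℝ) ^ Fintype.card V := graphPoly_ones H

lemma matrix_eq_zero_of_graphPoly_zero (hH : Norming H) {n : ℕ} (hn : 0 < n)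
    {M : Matrix (Fin n) (Fin n) ℝ} (hM : M.IsSymm) (h : graphPoly H M = 0) : M = 0 := by
  apply eq_zero_of_stepFn_ae_zero hn M
  apply hH.2 _ (stepFn_isKernel M hM)
  rw [homDensity_stepFn H hn M, h, zero_div]

lemma not_odd_edgeCount (hH : Norming H) : ¬ Odd (edgeCount H) := by
  intro hodd
  by_cases hc : graphPoly H sgnM = 0
  · have h0 := matrix_eq_zero_of_graphPoly_zero H hH (by norm_num) sgnM_symm hc
    have h00 := congrFun (congrFun h0 0) 0
    simp [sgnM] at h00
  · obtain ⟨x, hx1, hx⟩ := exists_inv_small (fun t => graphPoly H (sgnM + t • onesM 2))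
      (graphPoly_continuous H sgnM (onesM 2)) (by simp) hc
    have hxpos : (0:ℝ) < x := lt_of_lt_of_le one_pos hx1
    have hP0 : (0:ℝ) < graphPoly H (onesM 2 + (0:ℝ) • sgnM) := by
      simp only [zero_smul, add_zero, graphPoly_onesM H]
      positivity
    obtain ⟨x1, hx1ne, hx1neg⟩ : ∃ x1 : ℝ, x1 ≠ 0 ∧ graphPoly H (onesM 2 + x1 • sgnM) < 0 := by
      rcases lt_or_gt_of_ne hc with hneg | hpos
      · refine ⟨x, hxpos.ne', ?_⟩
        rw [graphPoly_scale H (onesM 2) sgnM hxpos.ne']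
        have hgy := hx x⁻¹ (le_of_eq (abs_of_nonneg (inv_nonneg.mpr hxpos.le)))
        have habs := abs_lt.mp hgy
        rw [abs_of_neg hneg] at habs
        have hlt0 : graphPoly H (sgnM + x⁻¹ • onesM 2) < 0 := by
          have h2 := habs.2
          linarith
        exact mul_neg_of_pos_of_neg (pow_pos hxpos _) hlt0
      · refine ⟨-x, neg_ne_zero.mpr hxpos.ne', ?_⟩
        rw [graphPoly_scale H (onesM 2) sgnM (neg_ne_zero.mpr hxpos.ne')]
        have hgy := hx (-x)⁻¹ (by rw [abs_inv, abs_neg, abs_of_nonneg hxpos.le])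
        have habs := abs_lt.mp hgy
        rw [abs_of_pos hpos] at habs
        have hgt0 : 0 < graphPoly H (sgnM + (-x)⁻¹ • onesM 2) := by
          have h1 := habs.1
          linarith
        exact mul_neg_of_neg_of_pos (Odd.pow_neg hodd (neg_lt_zero.mpr hxpos)) hgt0
    have hPc : Continuous fun t : ℝ => graphPoly H (onesM 2 + t • sgnM) :=
      graphPoly_continuous H (onesM 2) sgnM
    obtain ⟨x0, hx0⟩ : ∃ x0 : ℝ, graphPoly H (onesM 2 + x0 • sgnM) = 0 := by
      rcases lt_trichotomy x1 0 with h | h | h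
      · obtain ⟨x0, _, hx0⟩ := intermediate_value_Icc h.le hPc.continuousOn
          (Set.mem_Icc.mpr ⟨hx1neg.le, hP0.le⟩)
        exact ⟨x0, hx0⟩
      · exact absurd h hx1ne
      · obtain ⟨x0, _, hx0⟩ := intermediate_value_Icc' h.le hPc.continuousOn
          (Set.mem_Icc.mpr ⟨hx1neg.le, hP0.le⟩)
        exact ⟨x0, hx0⟩
    have hzero : onesM 2 + x0 • sgnM = 0 := matrix_eq_zero_of_graphPoly_zero H hH
      (by norm_num) (onesM_symm.add (sgnM_symm.smul x0)) hx0
    have h00 := congrFun (congrFun hzero 0) 0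
    have h01 := congrFun (congrFun hzero 0) 1
    simp [onesM, sgnM, Matrix.add_apply, Matrix.smul_apply] at h00 h01
    linarith [h00, h01]

lemma graphPoly_nonneg (hH : Norming H) {n : ℕ} (hn : 0 < n)
    (M : Matrix (Fin n) (Fin n) ℝ) (hM : M.IsSymm) : 0 ≤ graphPoly H M := by
  by_contra hneg
  push_neg at hneg
  have hcpos : (0:ℝ) < (n:ℝ) ^ Fintype.card V := by
    have : (0:ℝ) < (n:ℝ) := Nat.cast_pos.mpr hn
    positivity
  obtain ⟨x, hx1, hx⟩ := exists_inv_small (fun t => graphPoly H (onesM n + t • M))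
    (graphPoly_continuous H (onesM n) M)
    (c := (n:ℝ) ^ Fintype.card V) (by simp [graphPoly_onesM H]) hcpos.ne'
  have hxpos : (0:ℝ) < x := lt_of_lt_of_le one_pos hx1
  have hgy := hx x⁻¹ (le_of_eq (abs_of_nonneg (inv_nonneg.mpr hxpos.le)))
  have habs := abs_lt.mp hgy
  rw [abs_of_pos hcpos] at habs
  have hgpos : 0 < graphPoly H (onesM n + x⁻¹ • M) := by
    have h1 := habs.1
    linarith
  have hPx : 0 < graphPoly H (M + x • onesM n) := by
    rw [graphPoly_scale H M (onesM n) hxpos.ne']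
    exact mul_pos (pow_pos hxpos _) hgpos
  have hPc : Continuous fun t : ℝ => graphPoly H (M + t • onesM n) :=
    graphPoly_continuous H M (onesM n)
  have hP0 : graphPoly H (M + (0:ℝ) • onesM n) < 0 := by simpa using hneg
  obtain ⟨l0, _, hroot⟩ := intermediate_value_Icc hxpos.le hPc.continuousOn
    (Set.mem_Icc.mpr ⟨hP0.le, hPx.le⟩)
  have hMeq : M + l0 • onesM n = 0 := matrix_eq_zero_of_graphPoly_zero H hH hn
    (hM.add (onesM_symm.smul l0)) hroot
  have hMval : M = (-l0) • onesM n := by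
    rw [neg_smul]
    exact add_eq_zero_iff_eq_neg.mp hMeq
  rw [hMval, graphPoly_smul, graphPoly_onesM H] at hneg
  have hpow : (-l0) ^ edgeCount H < 0 := by
    by_contra hge
    push_neg at hge
    exact absurd hneg (not_lt.mpr (mul_nonneg hge hcpos.le))
  have hodd : Odd (edgeCount H) := by
    rcases Nat.even_or_odd (edgeCount H) with hev | ho
    · exact absurd hpow (not_lt.mpr (hev.pow_nonneg _))
    · exact ho
  exact not_odd_edgeCount H hH hodd

lemma graphPoly_line_convex (hH : Norming H) (he : edgeCount H ≠ 0) {n : ℕ} (hn : 0 < n)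
    (A B : Matrix (Fin n) (Fin n) ℝ) (hA : A.IsSymm) (hB : B.IsSymm) :
    ConvexOn ℝ Set.univ (fun s : ℝ => graphPoly H (A + s • B)) := by
  have hsymm : ∀ s : ℝ, (A + s • B).IsSymm := fun s => hA.add (hB.smul s)
  have hf0 : ∀ s : ℝ, 0 ≤ graphPoly H (A + s • B) := fun s =>
    graphPoly_nonneg H hH hn _ (hsymm s)
  have hcpos : (0:ℝ) < (n:ℝ) ^ Fintype.card V := by
    have : (0:ℝ) < (n:ℝ) := Nat.cast_pos.mpr hn
    positivity
  refine ⟨convex_univ, fun x _ y _ a b ha hb hab => ?_⟩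
  simp only [smul_eq_mul]
  have hpx0 : 0 ≤ (graphPoly H (A + x • B) / ((n:ℝ) ^ Fintype.card V)) ^ ((edgeCount H : ℝ)⁻¹) :=
    Real.rpow_nonneg (div_nonneg (hf0 x) hcpos.le) _
  have hpy0 : 0 ≤ (graphPoly H (A + y • B) / ((n:ℝ) ^ Fintype.card V)) ^ ((edgeCount H : ℝ)⁻¹) :=
    Real.rpow_nonneg (div_nonneg (hf0 y) hcpos.le) _
  have hpz0 : 0 ≤ (graphPoly H (A + (a * x + b * y) • B) / ((n:ℝ) ^ Fintype.card V)) ^ ((edgeCount H : ℝ)⁻¹) :=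
    Real.rpow_nonneg (div_nonneg (hf0 _) hcpos.le) _
  have htri : (graphPoly H (A + (a * x + b * y) • B) / ((n:ℝ) ^ Fintype.card V)) ^ ((edgeCount H : ℝ)⁻¹) ≤
      a * (graphPoly H (A + x • B) / ((n:ℝ) ^ Fintype.card V)) ^ ((edgeCount H : ℝ)⁻¹) +
      b * (graphPoly H (A + y • B) / ((n:ℝ) ^ Fintype.card V)) ^ ((edgeCount H : ℝ)⁻¹) := by
    have H1 := hH.1 (stepFn n (a • (A + x • B))) (stepFn n (b • (A + y • B)))
      (stepFn_isKernel _ ((hsymm x).smul a)) (stepFn_isKernel _ ((hsymm y).smul b))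
    have hmat : a • (A + x • B) + b • (A + y • B) = A + (a * x + b * y) • B := by
      rw [smul_add, smul_add, smul_smul, smul_smul, add_add_add_comm, ← add_smul, hab,
        one_smul, ← add_smul]
    have hfun : (fun p q : ℝ => stepFn n (a • (A + x • B)) p q
        + stepFn n (b • (A + y • B)) p q) = stepFn n (A + (a * x + b * y) • B) := by
      funext p q
      rw [← stepFn_add, hmat]
    rw [hfun] at H1
    rw [homDensity_stepFn H hn, homDensity_stepFn H hn, homDensity_stepFn H hn,
      graphPoly_smul, graphPoly_smul] at H1
    have e1 : ∀ t w : ℝ, 0 ≤ t →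
        |t ^ edgeCount H * graphPoly H (A + w • B) / ((n:ℝ) ^ Fintype.card V)| ^ ((edgeCount H : ℝ)⁻¹)
          = t * (graphPoly H (A + w • B) / ((n:ℝ) ^ Fintype.card V)) ^ ((edgeCount H : ℝ)⁻¹) := by
      intro t w ht
      rw [mul_div_assoc, abs_of_nonneg (mul_nonneg (pow_nonneg ht _)
        (div_nonneg (hf0 w) hcpos.le)),
        Real.mul_rpow (pow_nonneg ht _) (div_nonneg (hf0 w) hcpos.le),
        Real.pow_rpow_inv_natCast ht he]
    rw [e1 a x ha, e1 b y hb, abs_of_nonneg (div_nonneg (hf0 _) hcpos.le)] at H1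
    exact H1
  have hback : ∀ w : ℝ,
      ((graphPoly H (A + w • B) / ((n:ℝ) ^ Fintype.card V)) ^ ((edgeCount H : ℝ)⁻¹)) ^ edgeCount H
        * ((n:ℝ) ^ Fintype.card V) = graphPoly H (A + w • B) := by
    intro w
    rw [Real.rpow_inv_natCast_pow (div_nonneg (hf0 w) hcpos.le) he,
      div_mul_cancel₀ _ hcpos.ne']
  calc graphPoly H (A + (a * x + b * y) • B)
      = ((graphPoly H (A + (a * x + b * y) • B) / ((n:ℝ) ^ Fintype.card V)) ^
          ((edgeCount H : ℝ)⁻¹)) ^ edgeCount H * ((n:ℝ) ^ Fintype.card V) := (hback _).symm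
    _ ≤ (a * (graphPoly H (A + x • B) / ((n:ℝ) ^ Fintype.card V)) ^ ((edgeCount H : ℝ)⁻¹) +
          b * (graphPoly H (A + y • B) / ((n:ℝ) ^ Fintype.card V)) ^ ((edgeCount H : ℝ)⁻¹)) ^
            edgeCount H * ((n:ℝ) ^ Fintype.card V) :=
        mul_le_mul_of_nonneg_right (pow_le_pow_left₀ hpz0 htri _) hcpos.le
    _ ≤ (a * ((graphPoly H (A + x • B) / ((n:ℝ) ^ Fintype.card V)) ^ ((edgeCount H : ℝ)⁻¹)) ^ edgeCount H +
          b * ((graphPoly H (A + y • B) / ((n:ℝ) ^ Fintype.card V)) ^ ((edgeCount H : ℝ)⁻¹)) ^ edgeCount H) *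
            ((n:ℝ) ^ Fintype.card V) := by
        refine mul_le_mul_of_nonneg_right ?_ hcpos.le
        have hcx := (convexOn_pow (edgeCount H)).2 (Set.mem_Ici.mpr hpx0)
          (Set.mem_Ici.mpr hpy0) ha hb hab
        simpa [smul_eq_mul] using hcx
    _ = a * graphPoly H (A + x • B) + b * graphPoly H (A + y • B) := by
        rw [add_mul, mul_assoc, mul_assoc, hback x, hback y]

end NormingLemmas

end NormingAux

end NormingAuxSection

-- STATEMENT 12
theorem norming_hessian_psd {V : Type} [Fintype V] [LinearOrder V]
    (H : SimpleGraph V) [DecidableRel H.Adj] (hH : Norming H) :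
    ∀ n : ℕ, 1 ≤ n → ∀ A B : Matrix (Fin n) (Fin n) ℝ, A.IsSymm → B.IsSymm →
      0 ≤ iteratedDeriv 2 (fun s : ℝ => graphPoly H (A + s • B)) 0 := by
  intro n hn A B hA hB
  have hn0 : 0 < n := hn
  by_cases he : edgeCount H = 0
  · have hE : Finset.univ.filter (fun p : V × V => p.1 < p.2 ∧ H.Adj p.1 p.2) = ∅ :=
      Finset.card_eq_zero.mp he
    have hconst : (fun s : ℝ => graphPoly H (A + s • B)) =
        fun _ => ((Fintype.card (V → Fin n) : ℝ)) := by
      funext s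
      rw [NormingAux.graphPoly_def, hE]
      simp
    rw [hconst]
    simp [iteratedDeriv_succ, iteratedDeriv_zero]
  · have hconv := NormingAux.graphPoly_line_convex H hH he hn0 A B hA hB
    set Q : Polynomial ℝ := ∑ φ : V → Fin n,
      ∏ p ∈ Finset.univ.filter (fun p : V × V => p.1 < p.2 ∧ H.Adj p.1 p.2),
        (Polynomial.C (A (φ p.1) (φ p.2)) + Polynomial.C (B (φ p.1) (φ p.2)) * Polynomial.X)
      with hQ
    have heval : (fun s : ℝ => graphPoly H (A + s • B)) = fun s => Q.eval s := by
      funext s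
      rw [NormingAux.graphPoly_def, hQ]
      rw [Polynomial.eval_finset_sum]
      refine Finset.sum_congr rfl fun φ _ => ?_
      rw [Polynomial.eval_prod]
      refine Finset.prod_congr rfl fun p _ => ?_
      simp only [Polynomial.eval_add, Polynomial.eval_mul, Polynomial.eval_C, Polynomial.eval_X,
        Matrix.add_apply, Matrix.smul_apply, smul_eq_mul]
      ring
    have hdiff : ∀ z : ℝ, DifferentiableAt ℝ (fun s : ℝ => graphPoly H (A + s • B)) z := by
      intro z
      rw [heval]
      exact Q.differentiableAt
    have hmono : Monotone (deriv fun s : ℝ => graphPoly H (A + s • B)) :=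
      monotoneOn_univ.mp (hconv.monotoneOn_deriv fun z _ => hdiff z)
    have hd1 : (deriv fun s : ℝ => graphPoly H (A + s • B)) = fun z => Q.derivative.eval z := by
      funext z
      rw [heval]
      exact Polynomial.deriv (p := Q) (x := z)
    have h2 : HasDerivAt (deriv fun s : ℝ => graphPoly H (A + s • B))
        (Q.derivative.derivative.eval 0) 0 := by
      rw [hd1]
      exact Q.derivative.hasDerivAt 0
    have hiter : iteratedDeriv 2 (fun s : ℝ => graphPoly H (A + s • B)) 0
        = Q.derivative.derivative.eval 0 := by
      rw [iteratedDeriv_succ, iteratedDeriv_one]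
      exact h2.deriv
    rw [hiter]
    exact NormingAux.nonneg_of_monotone_hasDerivAt hmono h2
end

section
/- Let k > 4 be an integer, let H = C_k^⋈, and define h(x,y) = P_{H,3}(A_{x,y}) where A_{x,y} is the 3×3 symmetric matrix with rows (1, 1, y), (1, 0, 1), (y, 1, x). Then (∂²h/∂x²)(0,0) = 0 and (∂²h/∂x∂y)(0,0) ≥ 1; consequently the 2×2 Hessian matrix [[h_xx(0,0), h_xy(0,0)], [h_xy(0,0), h_yy(0,0)]] is not positive semidefinite. -/
open MeasureTheory

namespace CBAux

def Mxy (x y : ℝ) : Matrix (Fin 3) (Fin 3) ℝ := !![1,1,y;1,0,1;y,1,x]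

lemma Mxy_apply (x y : ℝ) (a b : Fin 3) : Mxy x y a b =
    if a = 2 ∧ b = 2 then x else if (a = 0 ∧ b = 2) ∨ (a = 2 ∧ b = 0) then y
    else if a = 1 ∧ b = 1 then 0 else 1 := by
  fin_cases a <;> fin_cases b <;>
    simp [Mxy, Matrix.cons_val_zero, Matrix.cons_val_one, Matrix.head_cons]

noncomputable def EdG {V : Type} [Fintype V] [LinearOrder V]
    (H : SimpleGraph V) [DecidableRel H.Adj] : Finset (V × V) :=
  Finset.univ.filter (fun p : V × V => p.1 < p.2 ∧ H.Adj p.1 p.2)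

lemma graphPoly_eq {V : Type} [Fintype V] [LinearOrder V]
    (H : SimpleGraph V) [DecidableRel H.Adj] {n : ℕ} (A : Matrix (Fin n) (Fin n) ℝ) :
    graphPoly H A = ∑ φ : V → Fin n, ∏ p ∈ EdG H, A (φ p.1) (φ p.2) := rfl

noncomputable def Ed (k : ℕ) : Finset ((Fin k × Fin 2) × (Fin k × Fin 2)) :=
  EdG (cycleBowtie k)

noncomputable def mSet (k : ℕ) (φ : Fin k × Fin 2 → Fin 3) :
    Finset ((Fin k × Fin 2) × (Fin k × Fin 2)) :=
  (Ed k).filter (fun p => φ p.1 = 2 ∧ φ p.2 = 2)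

noncomputable def nSet (k : ℕ) (φ : Fin k × Fin 2 → Fin 3) :
    Finset ((Fin k × Fin 2) × (Fin k × Fin 2)) :=
  ((Ed k).filter (fun p => ¬(φ p.1 = 2 ∧ φ p.2 = 2))).filter
    (fun p => (φ p.1 = 0 ∧ φ p.2 = 2) ∨ (φ p.1 = 2 ∧ φ p.2 = 0))

noncomputable def rSet (k : ℕ) (φ : Fin k × Fin 2 → Fin 3) :
    Finset ((Fin k × Fin 2) × (Fin k × Fin 2)) :=
  ((Ed k).filter (fun p => ¬(φ p.1 = 2 ∧ φ p.2 = 2))).filter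
    (fun p => ¬((φ p.1 = 0 ∧ φ p.2 = 2) ∨ (φ p.1 = 2 ∧ φ p.2 = 0)))

noncomputable def ee (k : ℕ) (φ : Fin k × Fin 2 → Fin 3) : ℝ :=
  ∏ p ∈ rSet k φ, (if φ p.1 = 1 ∧ φ p.2 = 1 then (0:ℝ) else 1)

lemma decomp (k : ℕ) (x y : ℝ) :
    graphPoly (cycleBowtie k) (Mxy x y) =
    ∑ φ : Fin k × Fin 2 → Fin 3,
      ee k φ * x ^ (mSet k φ).card * y ^ (nSet k φ).card := by
  rw [graphPoly_eq]
  refine Finset.sum_congr ?_ fun φ _ => ?_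
  · congr 1
    exact Subsingleton.elim _ _
  have key := Finset.prod_filter_mul_prod_filter_not (Ed k)
      (fun p => φ p.1 = 2 ∧ φ p.2 = 2) (fun p => Mxy x y (φ p.1) (φ p.2))
  have key2 := Finset.prod_filter_mul_prod_filter_not
      ((Ed k).filter (fun p => ¬(φ p.1 = 2 ∧ φ p.2 = 2)))
      (fun p => (φ p.1 = 0 ∧ φ p.2 = 2) ∨ (φ p.1 = 2 ∧ φ p.2 = 0))
      (fun p => Mxy x y (φ p.1) (φ p.2))
  have hx : (∏ p ∈ mSet k φ, Mxy x y (φ p.1) (φ p.2)) = x ^ (mSet k φ).card := by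
    rw [Finset.prod_congr rfl (fun p hp => ?_), Finset.prod_const]
    obtain ⟨-, h1, h2⟩ := Finset.mem_filter.mp hp
    rw [Mxy_apply, if_pos ⟨h1, h2⟩]
  have hy : (∏ p ∈ nSet k φ, Mxy x y (φ p.1) (φ p.2)) = y ^ (nSet k φ).card := by
    rw [Finset.prod_congr rfl (fun p hp => ?_), Finset.prod_const]
    obtain ⟨h0, h1⟩ := Finset.mem_filter.mp hp
    obtain ⟨-, h2⟩ := Finset.mem_filter.mp h0
    rw [Mxy_apply, if_neg h2, if_pos h1]
  have hr : (∏ p ∈ rSet k φ, Mxy x y (φ p.1) (φ p.2)) = ee k φ := by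
    refine Finset.prod_congr rfl fun p hp => ?_
    obtain ⟨h0, h1⟩ := Finset.mem_filter.mp hp
    obtain ⟨-, h2⟩ := Finset.mem_filter.mp h0
    rw [Mxy_apply, if_neg h2, if_neg h1]
  calc (∏ p ∈ Ed k, Mxy x y (φ p.1) (φ p.2))
      = (∏ p ∈ mSet k φ, Mxy x y (φ p.1) (φ p.2)) *
        ((∏ p ∈ nSet k φ, Mxy x y (φ p.1) (φ p.2)) *
         (∏ p ∈ rSet k φ, Mxy x y (φ p.1) (φ p.2))) := by
        rw [mSet, nSet, rSet, ← key, ← key2]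
    _ = ee k φ * x ^ (mSet k φ).card * y ^ (nSet k φ).card := by
        rw [hx, hy, hr]; ring

end CBAux

namespace CBAux

section Core

variable {k : ℕ}

lemma succ_mod_iff (hk : 0 < k) (a b : ℕ) (ha : a < k) (hb : b < k) :
    (a + 1) % k = b ↔ (a + 1 = b ∨ (a + 1 = k ∧ b = 0)) := by
  rcases Nat.lt_or_ge (a + 1) k with h | h
  · rw [Nat.mod_eq_of_lt h]; omega
  · have hak : a + 1 = k := by omega
    rw [hak, Nat.mod_self]; omega

def fs (a : Fin k) : Fin k := ⟨((a : ℕ) + 1) % k, Nat.mod_lt _ a.pos⟩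
def fp (a : Fin k) : Fin k := ⟨((a : ℕ) + (k - 1)) % k, Nat.mod_lt _ a.pos⟩

lemma fs_val (hk : 0 < k) (a : Fin k) :
    ((fs a : Fin k) : ℕ) = if (a : ℕ) + 1 = k then 0 else (a : ℕ) + 1 := by
  show ((a : ℕ) + 1) % k = _
  have ha := a.isLt
  split_ifs with h
  · rw [h, Nat.mod_self]
  · exact Nat.mod_eq_of_lt (by omega)

lemma fp_val (hk : 0 < k) (a : Fin k) :
    ((fp a : Fin k) : ℕ) = if (a : ℕ) = 0 then k - 1 else (a : ℕ) - 1 := by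
  show ((a : ℕ) + (k - 1)) % k = _
  have ha := a.isLt
  split_ifs with h
  · rw [h, Nat.zero_add]
    exact Nat.mod_eq_of_lt (by omega)
  · rw [Nat.mod_eq_sub_mod (by omega)]
    have h2 : (a : ℕ) + (k - 1) - k = (a : ℕ) - 1 := by omega
    rw [h2]
    exact Nat.mod_eq_of_lt (by omega)

lemma fp_succ (hk : 0 < k) (a : Fin k) : (((fp a : Fin k) : ℕ) + 1) % k = (a : ℕ) := by
  have ha := a.isLt
  rw [fp_val hk]
  split_ifs with h
  · have h2 : k - 1 + 1 = k := by omega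
    rw [h2, Nat.mod_self]; omega
  · have h2 : (a : ℕ) - 1 + 1 = (a : ℕ) := by omega
    rw [h2]
    exact Nat.mod_eq_of_lt ha

lemma fs_ne (hk : 4 < k) (a : Fin k) : fs a ≠ a := by
  have ha := a.isLt
  intro h
  have h' := congrArg Fin.val h
  rw [fs_val (by omega)] at h'
  split_ifs at h' <;> omega

lemma fp_ne (hk : 4 < k) (a : Fin k) : fp a ≠ a := by
  have ha := a.isLt
  intro h
  have h' := congrArg Fin.val h
  rw [fp_val (by omega)] at h'
  split_ifs at h' <;> omega

lemma fs_ne_fp (hk : 4 < k) (a : Fin k) : fs a ≠ fp a := by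
  have ha := a.isLt
  intro h
  have h' := congrArg Fin.val h
  rw [fs_val (by omega), fp_val (by omega)] at h'
  split_ifs at h' <;> omega

lemma fs_fs_ne (hk : 4 < k) (a : Fin k) : fs (fs a) ≠ a := by
  have ha := a.isLt
  have hb := (fs a).isLt
  intro h
  have h' := congrArg Fin.val h
  rw [fs_val (by omega) (fs a)] at h'
  rw [fs_val (by omega) a] at h'
  split_ifs at h' <;> omega

lemma adj_vert (a : Fin k) {i j : Fin 2} (hij : i ≠ j) :
    (cycleBowtie k).Adj (a, i) (a, j) := ⟨hij, Or.inl rfl⟩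

lemma adj_fs (a : Fin k) {i j : Fin 2} (hij : i ≠ j) :
    (cycleBowtie k).Adj (a, i) (fs a, j) := ⟨hij, Or.inr (Or.inl rfl)⟩

lemma adj_fp (hk : 0 < k) (a : Fin k) {i j : Fin 2} (hij : i ≠ j) :
    (cycleBowtie k).Adj (fp a, i) (a, j) := ⟨hij, Or.inr (Or.inl (fp_succ hk a))⟩

lemma fin2_cases : ∀ (i j : Fin 2), i ≠ j → (i = 0 ∧ j = 1) ∨ (i = 1 ∧ j = 0) := by decide

def mkE {α : Type*} [LinearOrder α] (u v : α) : α × α :=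
  if u < v then (u, v) else (v, u)

lemma mkE_cases {α : Type*} [LinearOrder α] (u v : α) :
    mkE u v = (u, v) ∨ mkE u v = (v, u) := by
  unfold mkE
  split
  · exact Or.inl rfl
  · exact Or.inr rfl

lemma mkE_comm {α : Type*} [LinearOrder α] (u v : α) : mkE u v = mkE v u := by
  unfold mkE
  rcases lt_trichotomy u v with h | h | h
  · rw [if_pos h, if_neg (not_lt.2 h.le)]
  · subst h; simp
  · rw [if_neg (not_lt.2 h.le), if_pos h]

lemma mkE_ne {α : Type*} [LinearOrder α] {u v u' w' : α} (h1 : w' ≠ u) (h2 : w' ≠ v) :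
    mkE u v ≠ mkE u' w' := by
  intro h
  rcases mkE_cases u v with h3 | h3 <;> rcases mkE_cases u' w' with h4 | h4 <;>
      rw [h3, h4, Prod.ext_iff] at h
  · exact h2 h.2.symm
  · exact h1 h.1.symm
  · exact h1 h.2.symm
  · exact h2 h.1.symm

lemma mkE_or {α : Type*} [LinearOrder α] (u v : α) (h : u ≠ v) :
    (u < v ∧ mkE u v = (u, v)) ∨ (v < u ∧ mkE u v = (v, u)) := by
  unfold mkE
  rcases h.lt_or_gt with h1 | h1
  · exact Or.inl ⟨h1, if_pos h1⟩
  · exact Or.inr ⟨h1, if_neg (lt_asymm h1)⟩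

lemma mkE_mem_Ed {u v : Fin k × Fin 2} (h : (cycleBowtie k).Adj u v) : mkE u v ∈ Ed k := by
  have hne : u ≠ v := h.ne
  rw [Ed, EdG]
  rcases mkE_or u v hne with ⟨hlt, heq⟩ | ⟨hlt, heq⟩ <;> rw [heq]
  · exact Finset.mem_filter.2 ⟨Finset.mem_univ _, hlt, h⟩
  · exact Finset.mem_filter.2 ⟨Finset.mem_univ _, hlt, h.symm⟩

lemma mkE_mem_mSet {φ : Fin k × Fin 2 → Fin 3} {u v : Fin k × Fin 2}
    (h : (cycleBowtie k).Adj u v) (hu : φ u = 2) (hv : φ v = 2) :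
    mkE u v ∈ mSet k φ := by
  rw [mSet]
  refine Finset.mem_filter.2 ⟨mkE_mem_Ed h, ?_⟩
  rcases mkE_cases u v with h3 | h3 <;> rw [h3] <;> exact ⟨by assumption, by assumption⟩

lemma adj_sum_ne {φ : Fin k × Fin 2 → Fin 3}
    (H : ∀ p ∈ Ed k, ((φ p.1 : ℕ) + (φ p.2 : ℕ)) ≠ 2)
    {u v : Fin k × Fin 2} (h : (cycleBowtie k).Adj u v) :
    ((φ u : ℕ) + (φ v : ℕ)) ≠ 2 := by
  have h0 := H _ (mkE_mem_Ed h)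
  rcases mkE_cases u v with h3 | h3 <;> rw [h3] at h0 <;> simp only [] at h0 <;> omega

lemma forced1 {φ : Fin k × Fin 2 → Fin 3}
    (H : ∀ p ∈ Ed k, ((φ p.1 : ℕ) + (φ p.2 : ℕ)) ≠ 2)
    {u v : Fin k × Fin 2} (h : (cycleBowtie k).Adj u v) (hu : φ u = 2) (hv : φ v ≠ 2) :
    φ v = 1 := by
  have hs := adj_sum_ne H h
  rw [hu] at hs
  have e2 : ((2 : Fin 3) : ℕ) = 2 := rfl
  rw [e2] at hs
  have hvv := (φ v).isLt
  have hne2 : ((φ v : Fin 3) : ℕ) ≠ 2 := by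
    intro hc
    exact hv (Fin.ext (by rw [hc, e2]))
  have e1 : ((1 : Fin 3) : ℕ) = 1 := rfl
  apply Fin.ext
  rw [e1]
  omega

lemma three_le_card {α : Type*} [DecidableEq α] {s : Finset α} {a b c : α}
    (ha : a ∈ s) (hb : b ∈ s) (hc : c ∈ s) (hab : a ≠ b) (hac : a ≠ c) (hbc : b ≠ c) :
    3 ≤ s.card := by
  have hsub : ({a, b, c} : Finset α) ⊆ s := by
    intro x hx
    simp only [Finset.mem_insert, Finset.mem_singleton] at hx
    rcases hx with rfl | rfl | rfl <;> assumption
  have hcard : ({a, b, c} : Finset α).card = 3 := by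
    rw [Finset.card_insert_of_notMem (by simp [hab, hac]),
        Finset.card_insert_of_notMem (by simp [hbc]), Finset.card_singleton]
  have := Finset.card_le_card hsub
  omega

lemma spawnR (hk : 4 < k) {φ : Fin k × Fin 2 → Fin 3}
    (H : ∀ p ∈ Ed k, ((φ p.1 : ℕ) + (φ p.2 : ℕ)) ≠ 2) (a : Fin k)
    (h0 : φ (a, 0) = 2) (h1 : φ (a, 1) = 2) :
    ∃ x w : Fin k × Fin 2, x.1 = a ∧ w.1 = fs a ∧ mkE x w ∈ mSet k φ := by
  by_cases hA : φ (fs a, 0) = 2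
  · exact ⟨(a, 1), (fs a, 0), rfl, rfl,
      mkE_mem_mSet (adj_fs a (by decide : (1 : Fin 2) ≠ 0)) h1 hA⟩
  by_cases hB : φ (fs a, 1) = 2
  · exact ⟨(a, 0), (fs a, 1), rfl, rfl,
      mkE_mem_mSet (adj_fs a (by decide : (0 : Fin 2) ≠ 1)) h0 hB⟩
  exfalso
  have hx := forced1 H (adj_fs a (by decide : (1 : Fin 2) ≠ 0)) h1 hA
  have hy := forced1 H (adj_fs a (by decide : (0 : Fin 2) ≠ 1)) h0 hB
  have hsum := adj_sum_ne H (adj_vert (fs a) (by decide : (0 : Fin 2) ≠ 1))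
  rw [hx, hy] at hsum
  exact hsum rfl

lemma spawnL (hk : 4 < k) {φ : Fin k × Fin 2 → Fin 3}
    (H : ∀ p ∈ Ed k, ((φ p.1 : ℕ) + (φ p.2 : ℕ)) ≠ 2) (a : Fin k)
    (h0 : φ (a, 0) = 2) (h1 : φ (a, 1) = 2) :
    ∃ x w : Fin k × Fin 2, x.1 = a ∧ w.1 = fp a ∧ mkE x w ∈ mSet k φ := by
  have hk0 : 0 < k := by omega
  by_cases hA : φ (fp a, 0) = 2
  · exact ⟨(a, 1), (fp a, 0), rfl, rfl,
      mkE_mem_mSet ((adj_fp hk0 a (by decide : (0 : Fin 2) ≠ 1)).symm) h1 hA⟩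
  by_cases hB : φ (fp a, 1) = 2
  · exact ⟨(a, 0), (fp a, 1), rfl, rfl,
      mkE_mem_mSet ((adj_fp hk0 a (by decide : (1 : Fin 2) ≠ 0)).symm) h0 hB⟩
  exfalso
  have hx := forced1 H ((adj_fp hk0 a (by decide : (0 : Fin 2) ≠ 1)).symm) h1 hA
  have hy := forced1 H ((adj_fp hk0 a (by decide : (1 : Fin 2) ≠ 0)).symm) h0 hB
  have hsum := adj_sum_ne H (adj_vert (fp a) (by decide : (0 : Fin 2) ≠ 1))
  rw [hx, hy] at hsum
  exact hsum rfl

lemma vert_case (hk : 4 < k) {φ : Fin k × Fin 2 → Fin 3}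
    (H : ∀ p ∈ Ed k, ((φ p.1 : ℕ) + (φ p.2 : ℕ)) ≠ 2) (a : Fin k)
    (h0 : φ (a, 0) = 2) (h1 : φ (a, 1) = 2) (hcard : (mSet k φ).card = 2) : False := by
  obtain ⟨x1, w1, hx1, hw1, he1⟩ := spawnR hk H a h0 h1
  obtain ⟨x2, w2, hx2, hw2, he2⟩ := spawnL hk H a h0 h1
  have he0 : mkE (a, 0) (a, 1) ∈ mSet k φ :=
    mkE_mem_mSet (adj_vert a (by decide : (0 : Fin 2) ≠ 1)) h0 h1
  have c1 := fs_ne hk a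
  have c2 := fp_ne hk a
  have c3 := fs_ne_fp hk a
  have hw1a : ∀ i : Fin 2, w1 ≠ (a, i) := by
    intro i hc
    apply c1; rw [← hw1, hc]
  have hw2a : ∀ i : Fin 2, w2 ≠ (a, i) := by
    intro i hc
    apply c2; rw [← hw2, hc]
  have d1 : mkE (a, 0) (a, 1) ≠ mkE x1 w1 := mkE_ne (hw1a 0) (hw1a 1)
  have d2 : mkE (a, 0) (a, 1) ≠ mkE x2 w2 := mkE_ne (hw2a 0) (hw2a 1)
  have d3 : mkE x1 w1 ≠ mkE x2 w2 := by
    apply mkE_ne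
    · intro hc; apply c2; rw [← hw2, hc, hx1]
    · intro hc; apply c3; rw [← hw1, ← hw2, hc]
  have := three_le_card he0 he1 he2 d1 d2 d3
  omega

lemma diag_case (hk : 4 < k) {φ : Fin k × Fin 2 → Fin 3}
    (H : ∀ p ∈ Ed k, ((φ p.1 : ℕ) + (φ p.2 : ℕ)) ≠ 2) (a : Fin k) (i j : Fin 2)
    (hij : i ≠ j) (hu : φ (a, i) = 2) (hv : φ (fs a, j) = 2)
    (hcard : (mSet k φ).card = 2) : False := by
  have c1 := fs_ne hk a
  have heD : mkE (a, i) (fs a, j) ∈ mSet k φ := mkE_mem_mSet (adj_fs a hij) hu hv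
  by_cases hq1 : φ (a, j) = 2
  · -- vertical at a
    have hcol : φ (a, 0) = 2 ∧ φ (a, 1) = 2 := by
      rcases fin2_cases i j hij with ⟨hi, hj⟩ | ⟨hi, hj⟩
      · rw [hi] at hu; rw [hj] at hq1; exact ⟨hu, hq1⟩
      · rw [hi] at hu; rw [hj] at hq1; exact ⟨hq1, hu⟩
    obtain ⟨x2, w2, hx2, hw2, he2⟩ := spawnL hk H a hcol.1 hcol.2
    have he0 : mkE (a, 0) (a, 1) ∈ mSet k φ :=
      mkE_mem_mSet (adj_vert a (by decide : (0 : Fin 2) ≠ 1)) hcol.1 hcol.2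
    have c2 := fp_ne hk a
    have c3 := fs_ne_fp hk a
    have d1 : mkE (a, 0) (a, 1) ≠ mkE (a, i) (fs a, j) := by
      apply mkE_ne
      · intro hc; apply c1; exact congrArg Prod.fst hc
      · intro hc; apply c1; exact congrArg Prod.fst hc
    have d2 : mkE (a, 0) (a, 1) ≠ mkE x2 w2 := by
      apply mkE_ne
      · intro hc; apply c2; rw [← hw2, hc]
      · intro hc; apply c2; rw [← hw2, hc]
    have d3 : mkE (a, i) (fs a, j) ≠ mkE x2 w2 := by
      apply mkE_ne
      · intro hc; apply c2; rw [← hw2, hc]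
      · intro hc; apply c3; rw [← hw2, hc]
    have := three_le_card he0 heD he2 d1 d2 d3
    omega
  by_cases hq2 : φ (fs a, i) = 2
  · -- vertical at fs a
    have hcol : φ (fs a, 0) = 2 ∧ φ (fs a, 1) = 2 := by
      rcases fin2_cases i j hij with ⟨hi, hj⟩ | ⟨hi, hj⟩
      · rw [hi] at hq2; rw [hj] at hv; exact ⟨hq2, hv⟩
      · rw [hi] at hq2; rw [hj] at hv; exact ⟨hv, hq2⟩
    obtain ⟨x1, w1, hx1, hw1, he1⟩ := spawnR hk H (fs a) hcol.1 hcol.2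
    have he0 : mkE (fs a, 0) (fs a, 1) ∈ mSet k φ :=
      mkE_mem_mSet (adj_vert (fs a) (by decide : (0 : Fin 2) ≠ 1)) hcol.1 hcol.2
    have c4 := fs_fs_ne hk a
    have c5 := fs_ne hk (fs a)
    have d1 : mkE (fs a, 0) (fs a, 1) ≠ mkE (a, i) (fs a, j) := by
      rw [mkE_comm (a, i) (fs a, j)]
      apply mkE_ne
      · intro hc; apply c1; exact (congrArg Prod.fst hc).symm
      · intro hc; apply c1; exact (congrArg Prod.fst hc).symm
    have d2 : mkE (fs a, 0) (fs a, 1) ≠ mkE x1 w1 := by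
      apply mkE_ne
      · intro hc; apply c5; rw [← hw1, hc]
      · intro hc; apply c5; rw [← hw1, hc]
    have d3 : mkE (a, i) (fs a, j) ≠ mkE x1 w1 := by
      apply mkE_ne
      · intro hc; apply c4; rw [← hw1, hc]
      · intro hc; apply c5; rw [← hw1, hc]
    have := three_le_card he0 heD he1 d1 d2 d3
    omega
  · have f1 : φ (a, j) = 1 := forced1 H (adj_vert a hij) hu hq1
    have f2 : φ (fs a, i) = 1 := forced1 H (adj_vert (fs a) hij.symm) hv hq2
    have hsum := adj_sum_ne H (adj_fs a hij.symm (i := j) (j := i))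
    rw [f1, f2] at hsum
    exact hsum rfl

lemma core {k : ℕ} (hk : 4 < k) (φ : Fin k × Fin 2 → Fin 3)
    (H : ∀ p ∈ Ed k, ((φ p.1 : ℕ) + (φ p.2 : ℕ)) ≠ 2) :
    (mSet k φ).card ≠ 2 := by
  intro hcard
  obtain ⟨p, hp⟩ := Finset.card_pos.mp (by omega : 0 < (mSet k φ).card)
  rw [mSet] at hp
  obtain ⟨hpE, hp1, hp2⟩ := Finset.mem_filter.mp hp
  have hpE' := hpE
  rw [Ed, EdG] at hpE'
  obtain ⟨-, hlt, hadj⟩ := Finset.mem_filter.mp hpE'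
  obtain ⟨hij, hcol⟩ := hadj
  rcases hcol with hc | hc | hc
  · have e1 : φ (p.1.1, p.1.2) = 2 := by rw [Prod.mk.eta]; exact hp1
    have e2 : φ (p.1.1, p.2.2) = 2 := by rw [hc, Prod.mk.eta]; exact hp2
    rcases fin2_cases p.1.2 p.2.2 hij with ⟨h1, h2⟩ | ⟨h1, h2⟩
    · rw [h1] at e1; rw [h2] at e2
      exact vert_case hk H p.1.1 e1 e2 hcard
    · rw [h1] at e1; rw [h2] at e2
      exact vert_case hk H p.1.1 e2 e1 hcard
  · have hfs : fs p.1.1 = p.2.1 := Fin.val_injective hc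
    have e1 : φ (p.1.1, p.1.2) = 2 := by rw [Prod.mk.eta]; exact hp1
    have e2 : φ (fs p.1.1, p.2.2) = 2 := by rw [hfs, Prod.mk.eta]; exact hp2
    exact diag_case hk H p.1.1 p.1.2 p.2.2 hij e1 e2 hcard
  · have hfs : fs p.2.1 = p.1.1 := Fin.val_injective hc
    have e1 : φ (p.2.1, p.2.2) = 2 := by rw [Prod.mk.eta]; exact hp2
    have e2 : φ (fs p.2.1, p.1.2) = 2 := by rw [hfs, Prod.mk.eta]; exact hp1
    exact diag_case hk H p.2.1 p.2.2 p.1.2 hij.symm e1 e2 hcard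

end Core

end CBAux

namespace CBAux

lemma hasDerivAt_monsum {ι : Type*} (s : Finset ι) (c : ι → ℝ) (m : ι → ℕ) (x : ℝ) :
    HasDerivAt (fun t : ℝ => ∑ i ∈ s, c i * t ^ m i)
      (∑ i ∈ s, c i * (m i * x ^ (m i - 1))) x := by
  apply HasDerivAt.fun_sum
  intro i _
  exact (hasDerivAt_pow (m i) x).const_mul (c i)

lemma key0 {k : ℕ} (hk : 4 < k) (φ : Fin k × Fin 2 → Fin 3)
    (hm : (mSet k φ).card = 2) (hn : (nSet k φ).card = 0) : ee k φ = 0 := by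
  by_contra h
  have hH : ∀ p ∈ Ed k, ((φ p.1 : ℕ) + (φ p.2 : ℕ)) ≠ 2 := by
    intro p hp
    by_cases h2 : φ p.1 = 2 ∧ φ p.2 = 2
    · rw [h2.1, h2.2]; decide
    by_cases hy : (φ p.1 = 0 ∧ φ p.2 = 2) ∨ (φ p.1 = 2 ∧ φ p.2 = 0)
    · exfalso
      have hmem : p ∈ nSet k φ := by
        rw [nSet]
        exact Finset.mem_filter.2 ⟨Finset.mem_filter.2 ⟨hp, h2⟩, hy⟩
      have := Finset.card_pos.2 ⟨p, hmem⟩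
      omega
    · have hr : p ∈ rSet k φ := by
        rw [rSet]
        exact Finset.mem_filter.2 ⟨Finset.mem_filter.2 ⟨hp, h2⟩, hy⟩
      have hfac := Finset.prod_ne_zero_iff.1 h p hr
      have h11 : ¬(φ p.1 = 1 ∧ φ p.2 = 1) := by
        intro hq; rw [if_pos hq] at hfac; exact hfac rfl
      revert h2 hy h11
      generalize φ p.1 = a; generalize φ p.2 = b
      revert a b; decide
  exact core hk φ hH hm

lemma itd2 (f : ℝ → ℝ) : iteratedDeriv 2 f = deriv (deriv f) := by
  have h : (2:ℕ) = 1 + 1 := rfl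
  rw [h, iteratedDeriv_succ, iteratedDeriv_one]

lemma part1 (k : ℕ) (hk : 4 < k) :
    iteratedDeriv 2
      (fun x : ℝ => graphPoly (cycleBowtie k) !![(1:ℝ), 1, 0; 1, 0, 1; 0, 1, x]) 0 = 0 := by
  have hfun : (fun x : ℝ => graphPoly (cycleBowtie k) !![(1:ℝ), 1, 0; 1, 0, 1; 0, 1, x])
      = fun x : ℝ => ∑ φ : Fin k × Fin 2 → Fin 3,
          (ee k φ * 0 ^ (nSet k φ).card) * x ^ (mSet k φ).card := by
    funext x
    rw [show !![(1:ℝ), 1, 0; 1, 0, 1; 0, 1, x] = Mxy x 0 from rfl, decomp]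
    exact Finset.sum_congr rfl fun φ _ => by ring
  rw [itd2, hfun]
  have hD1 : (deriv fun x : ℝ => ∑ φ : Fin k × Fin 2 → Fin 3,
        (ee k φ * 0 ^ (nSet k φ).card) * x ^ (mSet k φ).card)
      = fun x : ℝ => ∑ φ : Fin k × Fin 2 → Fin 3,
        ((ee k φ * 0 ^ (nSet k φ).card) * (mSet k φ).card) * x ^ ((mSet k φ).card - 1) := by
    funext x
    rw [(hasDerivAt_monsum Finset.univ _ _ x).deriv]
    exact Finset.sum_congr rfl fun φ _ => by ring
  rw [hD1, (hasDerivAt_monsum Finset.univ _ _ 0).deriv]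
  apply Finset.sum_eq_zero
  intro φ _
  have hcases : (mSet k φ).card = 0 ∨ (mSet k φ).card = 1 ∨ (mSet k φ).card = 2 ∨
      3 ≤ (mSet k φ).card := by omega
  rcases hcases with hm | hm | hm | hm
  · rw [hm]; norm_num
  · rw [hm]; norm_num
  · rcases Nat.eq_zero_or_pos (nSet k φ).card with hn | hn
    · rw [key0 hk φ hm hn, hm, hn]; norm_num
    · rw [hm, zero_pow (by omega : (nSet k φ).card ≠ 0)]; norm_num
  · rw [zero_pow (by omega : (mSet k φ).card - 1 - 1 ≠ 0)]; ring

end CBAux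

namespace CBAux

section Wit

variable {k : ℕ}

def φw (k : ℕ) : Fin k × Fin 2 → Fin 3 := fun v =>
  if v.2 = 0 then (if (v.1 : ℕ) = 0 then 2 else if (v.1 : ℕ) = 2 then 1 else 0)
  else (if (v.1 : ℕ) = 1 then 2 else if ((v.1 : ℕ) = 0 ∨ (v.1 : ℕ) = k - 1) then 1 else 0)

lemma phiw_eval (z : Fin k × Fin 2) : φw k z =
    if z.2 = 0 then (if (z.1 : ℕ) = 0 then 2 else if (z.1 : ℕ) = 2 then 1 else 0)
    else (if (z.1 : ℕ) = 1 then 2 else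
      if ((z.1 : ℕ) = 0 ∨ (z.1 : ℕ) = k - 1) then 1 else 0) := rfl

def wa (k : ℕ) (hk : 4 < k) : Fin k × Fin 2 := (⟨0, by omega⟩, 0)
def wb (k : ℕ) (hk : 4 < k) : Fin k × Fin 2 := (⟨1, by omega⟩, 1)
def wc (k : ℕ) (hk : 4 < k) : Fin k × Fin 2 := (⟨1, by omega⟩, 0)

lemma phiw_wa (hk : 4 < k) : φw k (wa k hk) = 2 := rfl
lemma phiw_wb (hk : 4 < k) : φw k (wb k hk) = 2 := rfl
lemma phiw_wc (hk : 4 < k) : φw k (wc k hk) = 0 := rfl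

lemma fin2_01 : ∀ i : Fin 2, i = 0 ∨ i = 1 := by decide

lemma vtx_eq (z : Fin k × Fin 2) (c : Fin k) (i : Fin 2)
    (h1 : (z.1 : ℕ) = (c : ℕ)) (h2 : z.2 = i) : z = (c, i) := by
  rw [← Prod.mk.eta (p := z)]
  rw [Prod.ext_iff]
  exact ⟨Fin.val_injective h1, h2⟩

lemma two_vertex (hk : 4 < k) (z : Fin k × Fin 2) (h : φw k z = 2) :
    z = wa k hk ∨ z = wb k hk := by
  rw [phiw_eval] at h
  rcases fin2_01 z.2 with hz | hz <;> rw [hz] at h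
  · rw [if_pos rfl] at h
    split_ifs at h with h1 h2
    · exact Or.inl (vtx_eq z _ _ h1 hz)
    · exact absurd h (by decide)
    · exact absurd h (by decide)
  · rw [if_neg (by decide : ¬((1:Fin 2) = 0))] at h
    split_ifs at h with h1 h2
    · exact Or.inr (vtx_eq z _ _ h1 hz)
    · exact absurd h (by decide)
    · exact absurd h (by decide)

lemma one_vertex (hk : 4 < k) (z : Fin k × Fin 2) (h : φw k z = 1) :
    ((z.1 : ℕ) = 2 ∧ z.2 = 0) ∨ (z.2 = 1 ∧ ((z.1 : ℕ) = 0 ∨ (z.1 : ℕ) = k - 1)) := by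
  rw [phiw_eval] at h
  rcases fin2_01 z.2 with hz | hz <;> rw [hz] at h
  · rw [if_pos rfl] at h
    split_ifs at h with h1 h2
    · exact absurd h (by decide)
    · exact Or.inl ⟨h2, hz⟩
    · exact absurd h (by decide)
  · rw [if_neg (by decide : ¬((1:Fin 2) = 0))] at h
    split_ifs at h with h1 h2
    · exact absurd h (by decide)
    · exact Or.inr ⟨hz, h2⟩
    · exact absurd h (by decide)

lemma EdG_lt {V : Type} [Fintype V] [LinearOrder V] {H : SimpleGraph V} [DecidableRel H.Adj]
    {p : V × V} (h : p ∈ EdG H) : p.1 < p.2 := by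
  rw [EdG] at h
  exact (Finset.mem_filter.mp h).2.1

lemma Ed_adj {p : (Fin k × Fin 2) × (Fin k × Fin 2)} (h : p ∈ Ed k) :
    (cycleBowtie k).Adj p.1 p.2 := by
  rw [Ed, EdG] at h
  exact (Finset.mem_filter.mp h).2.2

lemma mSet_mem_Ed {φ : Fin k × Fin 2 → Fin 3} {p} (h : p ∈ mSet k φ) : p ∈ Ed k := by
  rw [mSet] at h
  exact (Finset.mem_filter.mp h).1

lemma nSet_mem_Ed {φ : Fin k × Fin 2 → Fin 3} {p} (h : p ∈ nSet k φ) : p ∈ Ed k := by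
  rw [nSet] at h
  exact (Finset.mem_filter.mp (Finset.mem_filter.mp h).1).1

lemma rSet_mem_Ed {φ : Fin k × Fin 2 → Fin 3} {p} (h : p ∈ rSet k φ) : p ∈ Ed k := by
  rw [rSet] at h
  exact (Finset.mem_filter.mp (Finset.mem_filter.mp h).1).1

lemma eq_mkE_of_mem {α : Type*} [LinearOrder α] {s : Finset (α × α)}
    (hlt : ∀ p ∈ s, p.1 < p.2) {u v : α} {q : α × α} (hq : q ∈ s) (hmk : mkE u v ∈ s)
    (hcase : q = (u, v) ∨ q = (v, u)) : q = mkE u v := by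
  rcases mkE_cases u v with hm | hm <;> rcases hcase with rfl | rfl
  · rw [hm]
  · exfalso
    have h1 := hlt _ hq
    have h2 := hlt _ hmk
    rw [hm] at h2
    exact lt_asymm h1 h2
  · exfalso
    have h1 := hlt _ hq
    have h2 := hlt _ hmk
    rw [hm] at h2
    exact lt_asymm h1 h2
  · rw [hm]

lemma adj_ab (hk : 4 < k) : (cycleBowtie k).Adj (wa k hk) (wb k hk) := by
  refine ⟨(by decide : (0 : Fin 2) ≠ 1), Or.inr (Or.inl ?_)⟩
  show (0 + 1) % k = 1
  exact Nat.mod_eq_of_lt (by omega)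

lemma adj_cb (hk : 4 < k) : (cycleBowtie k).Adj (wc k hk) (wb k hk) :=
  ⟨(by decide : (0 : Fin 2) ≠ 1), Or.inl rfl⟩

lemma witM (hk : 4 < k) : (mSet k (φw k)).card = 1 := by
  have hmem : mkE (wa k hk) (wb k hk) ∈ mSet k (φw k) :=
    mkE_mem_mSet (adj_ab hk) (phiw_wa hk) (phiw_wb hk)
  rw [Finset.card_eq_one]
  refine ⟨mkE (wa k hk) (wb k hk), Finset.eq_singleton_iff_unique_mem.mpr ⟨hmem, ?_⟩⟩
  intro q hq
  have hqE := mSet_mem_Ed hq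
  rw [mSet] at hq
  obtain ⟨-, hq1, hq2⟩ := Finset.mem_filter.mp hq
  have hne : q.1 ≠ q.2 := (Ed_adj hqE).ne
  refine eq_mkE_of_mem (fun p hp => EdG_lt (mSet_mem_Ed hp)) hq hmem ?_
  rcases two_vertex hk q.1 hq1 with h1 | h1 <;> rcases two_vertex hk q.2 hq2 with h2 | h2
  · exact absurd (h1.trans h2.symm) hne
  · left; rw [← Prod.mk.eta (p := q), h1, h2]
  · right; rw [← Prod.mk.eta (p := q), h1, h2]
  · exact absurd (h1.trans h2.symm) hne

lemma no_adj_12 (hk : 4 < k) {c d : Fin k} (h2 : (c : ℕ) = 2)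
    (h0 : (d : ℕ) = 0 ∨ (d : ℕ) = k - 1)
    (hcol : c = d ∨ ((c : ℕ) + 1) % k = (d : ℕ) ∨ ((d : ℕ) + 1) % k = (c : ℕ)) : False := by
  have hc := c.isLt
  have hd := d.isLt
  rcases hcol with h | h | h
  · have := congrArg Fin.val h; omega
  · rw [succ_mod_iff (by omega) _ _ hc hd] at h; omega
  · rw [succ_mod_iff (by omega) _ _ hd hc] at h; omega

lemma witE (hk : 4 < k) : ee k (φw k) = 1 := by
  rw [ee]
  apply Finset.prod_eq_one
  intro p hp
  rw [if_neg]
  rintro ⟨h1a, h1b⟩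
  obtain ⟨hne2, hcol⟩ := Ed_adj (rSet_mem_Ed hp)
  rcases one_vertex hk p.1 h1a with ⟨hv1, hl1⟩ | ⟨hl1, hv1⟩ <;>
    rcases one_vertex hk p.2 h1b with ⟨hv2, hl2⟩ | ⟨hl2, hv2⟩
  · exact hne2 (hl1.trans hl2.symm)
  · exact no_adj_12 hk hv1 hv2 hcol
  · rcases hcol with h | h | h
    · exact no_adj_12 hk hv2 hv1 (Or.inl h.symm)
    · exact no_adj_12 hk hv2 hv1 (Or.inr (Or.inr h))
    · exact no_adj_12 hk hv2 hv1 (Or.inr (Or.inl h))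
  · exact hne2 (hl1.trans hl2.symm)

lemma zero_two (hk : 4 < k) {z w : Fin k × Fin 2}
    (hadj : (cycleBowtie k).Adj z w) (h0 : φw k z = 0) (h2 : φw k w = 2) :
    z = wc k hk ∧ w = wb k hk := by
  obtain ⟨hne2, hcol⟩ := hadj
  have hzc := z.1.isLt
  rcases two_vertex hk w h2 with rfl | rfl
  · -- w = wa, layer 0, col 0 : no 0-colored neighbor
    exfalso
    have hz2 : z.2 = 1 := by
      rcases fin2_01 z.2 with h | h
      · exact absurd (h.trans (rfl : (wa k hk).2 = (0:Fin 2)).symm) hne2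
      · exact h
    have hwcol : ((wa k hk).1 : ℕ) = 0 := rfl
    rw [phiw_eval, if_neg (by rw [hz2]; decide)] at h0
    rcases hcol with h | h | h
    · have hv : (z.1 : ℕ) = 0 := by rw [h, hwcol]
      rw [if_neg (by omega), if_pos (Or.inl hv)] at h0
      exact absurd h0 (by decide)
    · rw [hwcol, succ_mod_iff (by omega) _ _ hzc (by omega)] at h
      have hv : (z.1 : ℕ) = k - 1 := by omega
      rw [if_neg (by omega), if_pos (Or.inr hv)] at h0
      exact absurd h0 (by decide)
    · rw [hwcol] at h
      rw [succ_mod_iff (by omega) _ _ (by omega) hzc] at h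
      have hv : (z.1 : ℕ) = 1 := by omega
      rw [if_pos hv] at h0
      exact absurd h0 (by decide)
  · -- w = wb, layer 1, col 1
    have hz2 : z.2 = 0 := by
      rcases fin2_01 z.2 with h | h
      · exact h
      · exact absurd (h.trans (rfl : (wb k hk).2 = (1:Fin 2)).symm) hne2
    have hwcol : ((wb k hk).1 : ℕ) = 1 := rfl
    rw [phiw_eval, if_pos hz2] at h0
    rcases hcol with h | h | h
    · have hv : (z.1 : ℕ) = 1 := by rw [h, hwcol]
      rw [if_neg (by omega), if_neg (by omega)] at h0
      exact ⟨vtx_eq z _ _ hv hz2, rfl⟩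
    · exfalso
      rw [hwcol, succ_mod_iff (by omega) _ _ hzc (by omega)] at h
      have hv : (z.1 : ℕ) = 0 := by omega
      rw [if_pos hv] at h0
      exact absurd h0 (by decide)
    · exfalso
      rw [hwcol] at h
      rw [succ_mod_iff (by omega) _ _ (by omega) hzc] at h
      have hv : (z.1 : ℕ) = 2 := by omega
      rw [if_neg (by omega), if_pos hv] at h0
      exact absurd h0 (by decide)

lemma witN (hk : 4 < k) : (nSet k (φw k)).card = 1 := by
  have hmem : mkE (wc k hk) (wb k hk) ∈ nSet k (φw k) := by
    rw [nSet]
    refine Finset.mem_filter.2 ⟨Finset.mem_filter.2 ⟨mkE_mem_Ed (adj_cb hk), ?_⟩, ?_⟩ <;>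
      rcases mkE_cases (wc k hk) (wb k hk) with hm | hm <;> rw [hm]
    · rintro ⟨ha, -⟩
      rw [phiw_wc hk] at ha
      exact absurd ha (by decide)
    · rintro ⟨-, hb⟩
      rw [phiw_wc hk] at hb
      exact absurd hb (by decide)
    · exact Or.inl ⟨phiw_wc hk, phiw_wb hk⟩
    · exact Or.inr ⟨phiw_wb hk, phiw_wc hk⟩
  rw [Finset.card_eq_one]
  refine ⟨mkE (wc k hk) (wb k hk), Finset.eq_singleton_iff_unique_mem.mpr ⟨hmem, ?_⟩⟩
  intro q hq
  have hqE := nSet_mem_Ed hq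
  have hadj := Ed_adj hqE
  rw [nSet] at hq
  obtain ⟨-, hPy⟩ := Finset.mem_filter.mp hq
  refine eq_mkE_of_mem (fun p hp => EdG_lt (nSet_mem_Ed hp)) hq hmem ?_
  rcases hPy with ⟨h0, h2⟩ | ⟨h2, h0⟩
  · obtain ⟨e1, e2⟩ := zero_two hk hadj h0 h2
    left; rw [← Prod.mk.eta (p := q), e1, e2]
  · obtain ⟨e1, e2⟩ := zero_two hk hadj.symm h0 h2
    right; rw [← Prod.mk.eta (p := q), e1, e2]

end Wit

end CBAux

namespace CBAux

lemma ee_nonneg (k : ℕ) (φ : Fin k × Fin 2 → Fin 3) : 0 ≤ ee k φ := by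
  apply Finset.prod_nonneg
  intro p _
  split <;> norm_num

lemma part2 (k : ℕ) (hk : 4 < k) :
    1 ≤ deriv (fun y : ℝ => deriv
      (fun x : ℝ => graphPoly (cycleBowtie k) !![(1:ℝ), 1, y; 1, 0, 1; y, 1, x]) 0) 0 := by
  have hfun : (fun y : ℝ => deriv
        (fun x : ℝ => graphPoly (cycleBowtie k) !![(1:ℝ), 1, y; 1, 0, 1; y, 1, x]) 0)
      = fun y : ℝ => ∑ φ : Fin k × Fin 2 → Fin 3,
          (ee k φ * ((mSet k φ).card * (0:ℝ) ^ ((mSet k φ).card - 1))) * y ^ (nSet k φ).card := by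
    funext y
    have hinner : (fun x : ℝ => graphPoly (cycleBowtie k) !![(1:ℝ), 1, y; 1, 0, 1; y, 1, x])
        = fun x : ℝ => ∑ φ : Fin k × Fin 2 → Fin 3,
            (ee k φ * y ^ (nSet k φ).card) * x ^ (mSet k φ).card := by
      funext x
      rw [show !![(1:ℝ), 1, y; 1, 0, 1; y, 1, x] = Mxy x y from rfl, decomp]
      exact Finset.sum_congr rfl fun φ _ => by ring
    rw [hinner, (hasDerivAt_monsum Finset.univ _ _ 0).deriv]
    exact Finset.sum_congr rfl fun φ _ => by ring
  rw [hfun, (hasDerivAt_monsum Finset.univ _ _ 0).deriv]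
  have hwit : (ee k (φw k) * ((mSet k (φw k)).card * (0:ℝ) ^ ((mSet k (φw k)).card - 1))) *
      ((nSet k (φw k)).card * (0:ℝ) ^ ((nSet k (φw k)).card - 1)) = 1 := by
    rw [witM hk, witN hk, witE hk]; norm_num
  calc (1:ℝ) = _ := hwit.symm
    _ ≤ _ := by
        apply Finset.single_le_sum (f := fun φ : Fin k × Fin 2 → Fin 3 =>
          (ee k φ * ((mSet k φ).card * (0:ℝ) ^ ((mSet k φ).card - 1))) *
            ((nSet k φ).card * (0:ℝ) ^ ((nSet k φ).card - 1)))
          (fun φ _ => ?_) (Finset.mem_univ (φw k))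
        have := ee_nonneg k φ
        positivity
  
theorem final (k : ℕ) (hk : 4 < k) :
    iteratedDeriv 2
        (fun x : ℝ => graphPoly (cycleBowtie k) !![(1:ℝ), 1, 0; 1, 0, 1; 0, 1, x]) 0 = 0 ∧
    1 ≤ deriv (fun y : ℝ => deriv
        (fun x : ℝ => graphPoly (cycleBowtie k) !![(1:ℝ), 1, y; 1, 0, 1; y, 1, x]) 0) 0 ∧
    ¬ Matrix.PosSemidef
      !![iteratedDeriv 2
            (fun x : ℝ => graphPoly (cycleBowtie k) !![(1:ℝ), 1, 0; 1, 0, 1; 0, 1, x]) 0,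
          deriv (fun y : ℝ => deriv
            (fun x : ℝ => graphPoly (cycleBowtie k) !![(1:ℝ), 1, y; 1, 0, 1; y, 1, x]) 0) 0;
          deriv (fun y : ℝ => deriv
            (fun x : ℝ => graphPoly (cycleBowtie k) !![(1:ℝ), 1, y; 1, 0, 1; y, 1, x]) 0) 0,
          iteratedDeriv 2
            (fun y : ℝ => graphPoly (cycleBowtie k) !![(1:ℝ), 1, y; 1, 0, 1; y, 1, 0]) 0] := by
  have h1 := part1 k hk
  have h2 := part2 k hk
  refine ⟨h1, h2, ?_⟩
  set b := deriv (fun y : ℝ => deriv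
      (fun x : ℝ => graphPoly (cycleBowtie k) !![(1:ℝ), 1, y; 1, 0, 1; y, 1, x]) 0) 0 with hb
  set c := iteratedDeriv 2
      (fun y : ℝ => graphPoly (cycleBowtie k) !![(1:ℝ), 1, y; 1, 0, 1; y, 1, 0]) 0 with hc
  rw [h1]
  intro hpsd
  have this := hpsd.dotProduct_mulVec_nonneg ![|c| + 1, -1]
  simp only [Matrix.mulVec, dotProduct, Fin.sum_univ_two, Matrix.cons_val_zero,
    Matrix.cons_val_one, Matrix.head_cons, Matrix.cons_val', Matrix.empty_val',
    Matrix.cons_val_fin_one, Matrix.head_fin_const, Pi.star_apply, star_trivial,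
    Matrix.of_apply] at this
  nlinarith [abs_nonneg c, le_abs_self c]

end CBAux

-- STATEMENT 14
theorem cycleBowtie_hessian_not_psd (k : ℕ) (hk : 4 < k) :
    iteratedDeriv 2
        (fun x : ℝ => graphPoly (cycleBowtie k) !![(1:ℝ), 1, 0; 1, 0, 1; 0, 1, x]) 0 = 0 ∧
    1 ≤ deriv (fun y : ℝ => deriv
        (fun x : ℝ => graphPoly (cycleBowtie k) !![(1:ℝ), 1, y; 1, 0, 1; y, 1, x]) 0) 0 ∧
    ¬ Matrix.PosSemidef
      !![iteratedDeriv 2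
            (fun x : ℝ => graphPoly (cycleBowtie k) !![(1:ℝ), 1, 0; 1, 0, 1; 0, 1, x]) 0,
          deriv (fun y : ℝ => deriv
            (fun x : ℝ => graphPoly (cycleBowtie k) !![(1:ℝ), 1, y; 1, 0, 1; y, 1, x]) 0) 0;
          deriv (fun y : ℝ => deriv
            (fun x : ℝ => graphPoly (cycleBowtie k) !![(1:ℝ), 1, y; 1, 0, 1; y, 1, x]) 0) 0,
          iteratedDeriv 2
            (fun y : ℝ => graphPoly (cycleBowtie k) !![(1:ℝ), 1, y; 1, 0, 1; y, 1, 0]) 0] := CBAux.final k hk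
end
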